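/- arXiv:2305.00700 — 7 statements merged into one kernel-verified Lean document; each statement's English description precedes it below -/
import Mathlib

section
/- Model averaging for interpolating linear regression: let X ∈ ℝ^{n×k} with k > n such that X and every submatrix X_{−j} (with column j deleted) have full row rank n. For Y ∈ ℝ^n, let β̂ be the minimum-norm solution of Xβ = Y, and for each j let β̂^{(−j)} ∈ ℝ^k be the minimum-norm least-squares estimate constrained to have j-th coordinate zero. Then with λ_j = (1 − X_jᵀ(XXᵀ)⁻¹X_j)/(k − n) one has λ_j ∈ [0,1], Σ_j λ_j = 1, and β̂ = Σ_{j=1}^k λ_j β̂^{(−j)}. -/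
open Matrix BigOperators

/-- The matrix `X` with column `j` deleted. -/
noncomputable def delCol {n k : ℕ} (X : Matrix (Fin n) (Fin k) ℝ) (j : Fin k) :
    Matrix (Fin n) {i : Fin k // i ≠ j} ℝ :=
  X.submatrix id Subtype.val

/-- Minimum-norm interpolating least-squares solution `Xᵀ(XXᵀ)⁻¹Y`. -/
noncomputable def minNorm {n : ℕ} {m : Type*} [Fintype m]
    (X : Matrix (Fin n) m ℝ) (Y : Fin n → ℝ) : m → ℝ :=
  Xᵀ *ᵥ ((X * Xᵀ)⁻¹ *ᵥ Y)

/-- Minimum-norm interpolating solution with column `j` deleted, embedded back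
into `ℝ^k` with a zero in coordinate `j`. -/
noncomputable def minNormDel {n k : ℕ} (X : Matrix (Fin n) (Fin k) ℝ) (j : Fin k)
    (Y : Fin n → ℝ) : Fin k → ℝ :=
  fun i => if h : i = j then 0 else minNorm (delCol X j) Y ⟨i, h⟩

lemma aux_posDef_mul_transpose {n : ℕ} {m : Type*} [Fintype m]
    (A : Matrix (Fin n) m ℝ) (hA : A.rank = n) : (A * Aᵀ).PosDef := by
  have hrt : Aᵀ.rank = n := by rw [rank_transpose, hA]
  have hinj : Function.Injective Aᵀ.mulVecLin := by
    rw [← LinearMap.ker_eq_bot]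
    have h1 := LinearMap.finrank_range_add_finrank_ker Aᵀ.mulVecLin
    rw [Matrix.rank] at hrt
    rw [hrt] at h1
    simp only [Module.finrank_fintype_fun_eq_card, Fintype.card_fin] at h1
    have h2 : Module.finrank ℝ (LinearMap.ker Aᵀ.mulVecLin) = 0 := by omega
    exact Submodule.finrank_eq_zero.mp h2
  refine posDef_iff_dotProduct_mulVec.mpr ⟨?_, ?_⟩
  · simpa using isHermitian_mul_conjTranspose_self A
  · intro x hx
    have hw : Aᵀ *ᵥ x ≠ 0 := by
      intro h
      apply hx
      apply hinj
      show Aᵀ.mulVecLin x = Aᵀ.mulVecLin 0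
      simp only [Matrix.mulVecLin_apply, h, Matrix.mulVec_zero]
    have : star x ⬝ᵥ ((A * Aᵀ) *ᵥ x) = (Aᵀ *ᵥ x) ⬝ᵥ (Aᵀ *ᵥ x) := by
      rw [star_trivial, ← mulVec_mulVec, dotProduct_mulVec, ← mulVec_transpose]
    rw [this]
    have h0 : (Aᵀ *ᵥ x) ⬝ᵥ (Aᵀ *ᵥ x) = 0 ↔ (Aᵀ *ᵥ x) = 0 := dotProduct_self_eq_zero
    have h1 : 0 ≤ (Aᵀ *ᵥ x) ⬝ᵥ (Aᵀ *ᵥ x) :=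
      Finset.sum_nonneg fun i _ => mul_self_nonneg _
    exact lt_of_le_of_ne h1 (fun h => hw (h0.mp h.symm))

section helpers
variable {n : ℕ}

lemma aux_mul_vecMulVec (A : Matrix (Fin n) (Fin n) ℝ) (u v : Fin n → ℝ) :
    A * vecMulVec u v = vecMulVec (A *ᵥ u) v := by
  ext a b
  simp only [mul_apply, vecMulVec_apply, mulVec, dotProduct]
  rw [Finset.sum_mul]
  exact Finset.sum_congr rfl fun x _ => by ring

lemma aux_vecMulVec_mul (u v : Fin n → ℝ) (A : Matrix (Fin n) (Fin n) ℝ) :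
    vecMulVec u v * A = vecMulVec u (v ᵥ* A) := by
  ext a b
  simp only [mul_apply, vecMulVec_apply, vecMul, dotProduct]
  rw [Finset.mul_sum]
  exact Finset.sum_congr rfl fun x _ => by ring

lemma aux_smul_vecMulVec (c : ℝ) (u v : Fin n → ℝ) :
    vecMulVec (c • u) v = c • vecMulVec u v := by
  ext a b
  simp [vecMulVec_apply, mul_assoc]

lemma aux_vecMulVec_mulVec (u v Y : Fin n → ℝ) :
    vecMulVec u v *ᵥ Y = (v ⬝ᵥ Y) • u := by
  ext a
  simp only [vecMulVec_apply, mulVec, dotProduct, Pi.smul_apply, smul_eq_mul]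
  rw [Finset.sum_mul]
  exact Finset.sum_congr rfl fun x _ => by ring

lemma aux_sherman (G : Matrix (Fin n) (Fin n) ℝ) (hG : IsUnit G.det)
    (hGs : Gᵀ = G) (v : Fin n → ℝ) (hh : 1 - v ⬝ᵥ G⁻¹ *ᵥ v ≠ 0) :
    (G - vecMulVec v v)⁻¹ =
      G⁻¹ + (1 - v ⬝ᵥ G⁻¹ *ᵥ v)⁻¹ • vecMulVec (G⁻¹ *ᵥ v) (G⁻¹ *ᵥ v) := by
  set h : ℝ := v ⬝ᵥ G⁻¹ *ᵥ v with hh'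
  set κ : ℝ := (1 - h)⁻¹ with hκ
  set w : Fin n → ℝ := G⁻¹ *ᵥ v with hw
  apply inv_eq_right_inv
  have hvG : v ᵥ* G⁻¹ = w := by
    rw [← mulVec_transpose, transpose_nonsing_inv, hGs, hw]
  have hGw : G *ᵥ w = v := by
    rw [hw, mulVec_mulVec, mul_nonsing_inv _ hG, one_mulVec]
  have hvw : v ⬝ᵥ w = h := rfl
  have e1 : (G - vecMulVec v v) * (G⁻¹ + κ • vecMulVec w w)
      = 1 + κ • vecMulVec v w - (vecMulVec v w + (κ * h) • vecMulVec v w) := by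
    rw [Matrix.sub_mul, Matrix.mul_add, Matrix.mul_add, Matrix.mul_smul, Matrix.mul_smul,
      mul_nonsing_inv _ hG, aux_mul_vecMulVec, hGw, aux_vecMulVec_mul, hvG,
      aux_mul_vecMulVec]
    congr 1
    rw [aux_vecMulVec_mulVec, hvw, aux_smul_vecMulVec, smul_smul]
  rw [e1]
  have hc : κ - (1 + κ * h) = 0 := by
    rw [hκ]; field_simp; ring
  have e2 : κ • vecMulVec v w - (vecMulVec v w + (κ * h) • vecMulVec v w)
      = (κ - (1 + κ * h)) • vecMulVec v w := by
    rw [sub_smul, add_smul, one_smul]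
  rw [add_sub_assoc, e2, hc, zero_smul, add_zero]

lemma aux_det_sub (G : Matrix (Fin n) (Fin n) ℝ) (hG : IsUnit G.det) (v : Fin n → ℝ) :
    (G - vecMulVec v v).det = G.det * (1 - v ⬝ᵥ G⁻¹ *ᵥ v) := by
  have h1 : G - vecMulVec v v = G + replicateCol Unit (-v) * replicateRow Unit v := by
    rw [← vecMulVec_eq Unit, sub_eq_add_neg]
    congr 1
    ext a b
    simp [vecMulVec_apply]
  rw [h1, det_add_replicateCol_mul_replicateRow hG]
  congr 1
  rw [det_unique, Matrix.mul_assoc, ← Matrix.replicateCol_mulVec, Matrix.add_apply]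
  show (1 : Matrix Unit Unit ℝ) default default + _ = _
  simp only [Matrix.one_apply_eq, replicateRow_mul_replicateCol_apply, mulVec_neg, dotProduct_neg,
    dotProduct_mulVec, sub_eq_add_neg]

lemma aux_dot_symm (M : Matrix (Fin n) (Fin n) ℝ) (hM : Mᵀ = M) (v y : Fin n → ℝ) :
    (M *ᵥ v) ⬝ᵥ y = v ⬝ᵥ (M *ᵥ y) := by
  conv_lhs => rw [← hM, mulVec_transpose]
  rw [← dotProduct_mulVec]

end helpers

lemma aux_delCol_mul (nn kk : ℕ) (X : Matrix (Fin nn) (Fin kk) ℝ) (j : Fin kk) :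
    delCol X j * (delCol X j)ᵀ
      = X * Xᵀ - vecMulVec (fun i => X i j) (fun i => X i j) := by
  ext a b
  simp only [mul_apply, transpose_apply, delCol, submatrix_apply, id_eq, Matrix.sub_apply,
    vecMulVec_apply]
  rw [← Finset.sum_subtype (Finset.univ.erase j)
    (fun x => by simp [Finset.mem_erase]) (fun i => X a i * X b i)]
  rw [Finset.sum_erase_eq_sub (Finset.mem_univ j)]

/-- Model averaging for interpolating linear least-squares regression:
the minimum-norm interpolating solution is a convex combination of the
leave-one-covariate-out minimum-norm solutions, with leverage-based weights. -/
theorem model_averaging_interpolating_ols {n k : ℕ} (hkn : n < k)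
    (X : Matrix (Fin n) (Fin k) ℝ) (hX : X.rank = n)
    (hXd : ∀ j : Fin k, (delCol X j).rank = n) (Y : Fin n → ℝ) :
    (∀ j : Fin k,
        (1 - (fun i => X i j) ⬝ᵥ ((X * Xᵀ)⁻¹ *ᵥ fun i => X i j)) / ((k : ℝ) - n)
          ∈ Set.Icc (0 : ℝ) 1) ∧
    (∑ j : Fin k,
        (1 - (fun i => X i j) ⬝ᵥ ((X * Xᵀ)⁻¹ *ᵥ fun i => X i j)) / ((k : ℝ) - n) = 1) ∧
    minNorm X Y =
      ∑ j : Fin k,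
        ((1 - (fun i => X i j) ⬝ᵥ ((X * Xᵀ)⁻¹ *ᵥ fun i => X i j)) / ((k : ℝ) - n))
          • minNormDel X j Y := by
  classical
  have hGpd : (X * Xᵀ).PosDef := aux_posDef_mul_transpose X hX
  set G := X * Xᵀ with hGdef
  have hGs : Gᵀ = G := by rw [hGdef, transpose_mul, transpose_transpose]
  have hGdet : 0 < G.det := hGpd.det_pos
  have hGu : IsUnit G.det := hGdet.ne'.isUnit
  have hGis : G⁻¹ᵀ = G⁻¹ := by rw [transpose_nonsing_inv, hGs]
  have hkR : (0:ℝ) < (k:ℝ) - n := by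
    have : (n:ℝ) < k := by exact_mod_cast hkn
    linarith
  have h1k : (1:ℝ) ≤ (k:ℝ) - n := by
    have : ((n+1 : ℕ):ℝ) ≤ k := by exact_mod_cast hkn
    push_cast at this
    linarith
  have hnn : ∀ j : Fin k, 0 ≤ (fun i => X i j) ⬝ᵥ (G⁻¹ *ᵥ fun i => X i j) := by
    intro j
    have := hGpd.inv.posSemidef.dotProduct_mulVec_nonneg (fun i => X i j)
    simpa using this
  have hGj : ∀ j, delCol X j * (delCol X j)ᵀ
      = G - vecMulVec (fun i => X i j) (fun i => X i j) := fun j => aux_delCol_mul n k X j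
  have hlt : ∀ j : Fin k, 0 < 1 - (fun i => X i j) ⬝ᵥ (G⁻¹ *ᵥ fun i => X i j) := by
    intro j
    have hpd : (G - vecMulVec (fun i => X i j) (fun i => X i j)).PosDef := by
      rw [← hGj j]; exact aux_posDef_mul_transpose (delCol X j) (hXd j)
    have hd := hpd.det_pos
    rw [aux_det_sub G hGu] at hd
    by_contra hcon
    push_neg at hcon
    nlinarith
  -- trace identity
  have htr : ∑ j : Fin k, (fun i => X i j) ⬝ᵥ (G⁻¹ *ᵥ fun i => X i j) = (n:ℝ) := by
    calc ∑ j : Fin k, (fun i => X i j) ⬝ᵥ (G⁻¹ *ᵥ fun i => X i j)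
        = ∑ j : Fin k, ∑ s, ∑ t, G⁻¹ s t * (X s j * X t j) := by
          refine Finset.sum_congr rfl fun j _ => ?_
          simp only [dotProduct, mulVec]
          refine Finset.sum_congr rfl fun s _ => ?_
          rw [Finset.mul_sum]
          exact Finset.sum_congr rfl fun t _ => by ring
      _ = ∑ s, ∑ t, G⁻¹ s t * G s t := by
          rw [Finset.sum_comm]
          refine Finset.sum_congr rfl fun s _ => ?_
          rw [Finset.sum_comm]
          refine Finset.sum_congr rfl fun t _ => ?_
          rw [← Finset.mul_sum]
          congr 1
      _ = ∑ s, (G⁻¹ * G) s s := by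
          refine Finset.sum_congr rfl fun s _ => ?_
          rw [mul_apply]
          refine Finset.sum_congr rfl fun t _ => ?_
          congr 1
          rw [show G s t = Gᵀ t s from rfl, hGs]
      _ = (n:ℝ) := by
          rw [nonsing_inv_mul G hGu]
          simp [Matrix.one_apply]
  have hsum1 : ∑ j : Fin k,
      (1 - (fun i => X i j) ⬝ᵥ (G⁻¹ *ᵥ fun i => X i j)) / ((k : ℝ) - n) = 1 := by
    rw [← Finset.sum_div, Finset.sum_sub_distrib, htr, Finset.sum_const]
    simp only [Finset.card_univ, Fintype.card_fin, nsmul_eq_mul, mul_one]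
    exact div_self hkR.ne'
  refine ⟨?_, hsum1, ?_⟩
  · intro j
    refine Set.mem_Icc.mpr ⟨div_nonneg (hlt j).le hkR.le, ?_⟩
    rw [div_le_one hkR]
    have := hnn j
    linarith
  -- main identity
  have ha : ∀ i : Fin k, minNorm X Y i = (fun t => X t i) ⬝ᵥ (G⁻¹ *ᵥ Y) := fun i => rfl
  have hmnd : ∀ (j i : Fin k), i ≠ j → minNormDel X j Y i
      = minNorm X Y i + (1 - (fun t => X t j) ⬝ᵥ (G⁻¹ *ᵥ fun t => X t j))⁻¹ *
        (((fun t => X t i) ⬝ᵥ (G⁻¹ *ᵥ fun t => X t j)) * minNorm X Y j) := by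
    intro j i hij
    have hGjinv : (delCol X j * (delCol X j)ᵀ)⁻¹
        = G⁻¹ + (1 - (fun t => X t j) ⬝ᵥ (G⁻¹ *ᵥ fun t => X t j))⁻¹ •
          vecMulVec (G⁻¹ *ᵥ fun t => X t j) (G⁻¹ *ᵥ fun t => X t j) := by
      rw [hGj j]
      exact aux_sherman G hGu hGs _ (hlt j).ne'
    have hz : (delCol X j * (delCol X j)ᵀ)⁻¹ *ᵥ Y
        = (G⁻¹ *ᵥ Y) + ((1 - (fun t => X t j) ⬝ᵥ (G⁻¹ *ᵥ fun t => X t j))⁻¹ *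
            ((G⁻¹ *ᵥ fun t => X t j) ⬝ᵥ Y)) • (G⁻¹ *ᵥ fun t => X t j) := by
      rw [hGjinv, add_mulVec, smul_mulVec, aux_vecMulVec_mulVec, smul_smul]
    simp only [minNormDel]
    rw [dif_neg hij, minNorm, hz, mulVec_add, mulVec_smul]
    show ((fun t => X t i) ⬝ᵥ (G⁻¹ *ᵥ Y))
        + ((1 - (fun t => X t j) ⬝ᵥ (G⁻¹ *ᵥ fun t => X t j))⁻¹ *
            ((G⁻¹ *ᵥ fun t => X t j) ⬝ᵥ Y)) *
          ((fun t => X t i) ⬝ᵥ (G⁻¹ *ᵥ fun t => X t j)) = _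
    rw [aux_dot_symm G⁻¹ hGis, ha i, ha j]
    ring
  have hMa : ∀ i : Fin k, ∑ j : Fin k,
      ((fun t => X t i) ⬝ᵥ (G⁻¹ *ᵥ fun t => X t j)) * minNorm X Y j = minNorm X Y i := by
    intro i
    have hXa : X *ᵥ (minNorm X Y) = Y := by
      rw [minNorm, mulVec_mulVec, ← hGdef, mulVec_mulVec, mul_nonsing_inv _ hGu, one_mulVec]
    calc ∑ j : Fin k, ((fun t => X t i) ⬝ᵥ (G⁻¹ *ᵥ fun t => X t j)) * minNorm X Y j
        = ∑ j : Fin k, ((G⁻¹ *ᵥ fun t => X t i) ⬝ᵥ fun t => X t j) * minNorm X Y j := by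
          refine Finset.sum_congr rfl fun j _ => ?_
          rw [aux_dot_symm G⁻¹ hGis]
      _ = ∑ t, (G⁻¹ *ᵥ fun t => X t i) t * ∑ j, X t j * minNorm X Y j := by
          simp only [dotProduct, Finset.sum_mul]
          rw [Finset.sum_comm]
          refine Finset.sum_congr rfl fun t _ => ?_
          rw [Finset.mul_sum]
          exact Finset.sum_congr rfl fun j _ => by ring
      _ = (G⁻¹ *ᵥ fun t => X t i) ⬝ᵥ (X *ᵥ minNorm X Y) := rfl
      _ = minNorm X Y i := by
          rw [hXa, aux_dot_symm G⁻¹ hGis, ha i]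
  funext i
  rw [Finset.sum_apply]
  simp only [Pi.smul_apply, smul_eq_mul]
  rw [← Finset.add_sum_erase _ _ (Finset.mem_univ i)]
  have h0 : minNormDel X i Y i = 0 := by simp [minNormDel]
  rw [h0, mul_zero, zero_add]
  have hterm : ∀ j ∈ Finset.univ.erase i,
      (1 - (fun t => X t j) ⬝ᵥ (G⁻¹ *ᵥ fun t => X t j)) / ((k : ℝ) - n) * minNormDel X j Y i
      = (1 - (fun t => X t j) ⬝ᵥ (G⁻¹ *ᵥ fun t => X t j)) / ((k : ℝ) - n) * minNorm X Y i
        + ((fun t => X t i) ⬝ᵥ (G⁻¹ *ᵥ fun t => X t j)) * minNorm X Y j / ((k : ℝ) - n) := by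
    intro j hj
    have hij : i ≠ j := (Finset.ne_of_mem_erase hj).symm
    rw [hmnd j i hij, mul_add]
    congr 1
    rw [div_mul_eq_mul_div, ← mul_assoc, mul_inv_cancel₀ (hlt j).ne', one_mul]
  have hA : ∑ j ∈ Finset.univ.erase i,
      (1 - (fun t => X t j) ⬝ᵥ (G⁻¹ *ᵥ fun t => X t j)) / ((k : ℝ) - n)
      = 1 - (1 - (fun t => X t i) ⬝ᵥ (G⁻¹ *ᵥ fun t => X t i)) / ((k : ℝ) - n) := by
    rw [Finset.sum_erase_eq_sub (Finset.mem_univ i), hsum1]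
  have hB : ∑ j ∈ Finset.univ.erase i,
      ((fun t => X t i) ⬝ᵥ (G⁻¹ *ᵥ fun t => X t j)) * minNorm X Y j
      = minNorm X Y i
        - ((fun t => X t i) ⬝ᵥ (G⁻¹ *ᵥ fun t => X t i)) * minNorm X Y i := by
    rw [Finset.sum_erase_eq_sub (Finset.mem_univ i), hMa i]
  rw [Finset.sum_congr rfl hterm, Finset.sum_add_distrib, ← Finset.sum_mul, hA,
    ← Finset.sum_div, hB]
  have hX0 := hnn i
  field_simp
  ring
end

section
/- Variation hierarchy above the interpolation threshold: let X ∈ ℝ^{n×k} with k > n, such that X and each X_{−j} have full row rank. For Y_A, Y_B ∈ ℝ^n let β̂_A, β̂_B be the minimum-norm interpolating solutions on X, and β̂^{(−j)}_A, β̂^{(−j)}_B those on X_{−j} (embedded with zero j-th coordinate). Then ‖β̂_A − β̂_B‖ ≤ ‖β̂^{(−j)}_A − β̂^{(−j)}_B‖ for every j. -/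
open Matrix BigOperators

/-- A square real matrix of full rank is a unit. -/
lemma isUnit_of_rank_eq_card {n : ℕ} (A : Matrix (Fin n) (Fin n) ℝ) (h : A.rank = n) :
    IsUnit A := by
  rw [← Matrix.mulVec_surjective_iff_isUnit]
  have hr : LinearMap.range A.mulVecLin = ⊤ := by
    apply Submodule.eq_top_of_finrank_eq
    rw [show Module.finrank ℝ ↥(LinearMap.range A.mulVecLin) = A.rank from rfl, h]
    simp [Module.finrank_fintype_fun_eq_card]
  intro y
  exact LinearMap.range_eq_top.mp hr y

/-- The Gram matrix `X * Xᵀ` of a full-row-rank matrix is a unit. -/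
lemma gram_isUnit {n : ℕ} {m : Type*} [Fintype m] (X : Matrix (Fin n) m ℝ)
    (h : X.rank = n) : IsUnit (X * Xᵀ) := by
  apply isUnit_of_rank_eq_card
  rw [Matrix.rank_self_mul_transpose, h]

/-- The minimum-norm solution interpolates. -/
lemma minNorm_interpolates {n : ℕ} {m : Type*} [Fintype m] (X : Matrix (Fin n) m ℝ)
    (h : X.rank = n) (Y : Fin n → ℝ) : X *ᵥ minNorm X Y = Y := by
  have hu := gram_isUnit X h
  unfold minNorm
  rw [Matrix.mulVec_mulVec, Matrix.mulVec_mulVec,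
    Matrix.mul_nonsing_inv _ ((Matrix.isUnit_iff_isUnit_det _).mp hu), Matrix.one_mulVec]

/-- The embedded leave-one-out minimum-norm solution interpolates on `X`. -/
lemma minNormDel_interpolates {n k : ℕ} (X : Matrix (Fin n) (Fin k) ℝ) (j : Fin k)
    (h : (delCol X j).rank = n) (Y : Fin n → ℝ) : X *ᵥ minNormDel X j Y = Y := by
  have key : X *ᵥ minNormDel X j Y = delCol X j *ᵥ minNorm (delCol X j) Y := by
    funext i
    simp only [Matrix.mulVec, dotProduct, minNormDel, delCol, Matrix.submatrix_apply,
      id_eq]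
    rw [← Finset.sum_erase (Finset.univ) (a := j) (by simp)]
    rw [Finset.sum_subtype (Finset.univ.erase j)
      (p := fun l => l ≠ j) (fun x => by simp [Finset.mem_erase])]
    apply Finset.sum_congr rfl
    intro x _
    simp [x.2]
  rw [key, minNorm_interpolates _ h]

/-- A symmetric idempotent matrix contracts Euclidean norms. -/
lemma proj_contract {k : ℕ} (P : Matrix (Fin k) (Fin k) ℝ) (hsym : Pᵀ = P)
    (hid : P * P = P) (d : Fin k → ℝ) :
    ∑ i, (P *ᵥ d) i ^ 2 ≤ ∑ i, d i ^ 2 := by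
  have hdot : ∀ u : Fin k → ℝ, ∑ i, u i ^ 2 = u ⬝ᵥ u := by
    intro u; simp [dotProduct, sq]
  have hP : (P *ᵥ d) ⬝ᵥ (P *ᵥ d) = (P *ᵥ d) ⬝ᵥ d := by
    rw [Matrix.dotProduct_mulVec]
    congr 1
    rw [← Matrix.mulVec_transpose, hsym, Matrix.mulVec_mulVec, hid]
  have hexp : d ⬝ᵥ d = (P *ᵥ d) ⬝ᵥ (P *ᵥ d) + (d - P *ᵥ d) ⬝ᵥ (d - P *ᵥ d) := by
    have h2 : (d - P *ᵥ d) ⬝ᵥ (d - P *ᵥ d)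
        = d ⬝ᵥ d - 2 * ((P *ᵥ d) ⬝ᵥ d) + (P *ᵥ d) ⬝ᵥ (P *ᵥ d) := by
      simp only [sub_dotProduct, dotProduct_sub]
      rw [dotProduct_comm d (P *ᵥ d)]
      ring
    rw [h2, hP]; ring
  have hnn : 0 ≤ (d - P *ᵥ d) ⬝ᵥ (d - P *ᵥ d) := by
    apply Finset.sum_nonneg
    intro i _
    exact mul_self_nonneg _
  rw [hdot, hdot, hexp]
  linarith

/-- Variation hierarchy above the interpolation threshold: in Euclidean norm,
the variation of the minimum-norm interpolating solution across two outcome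
draws is at most that of any leave-one-covariate-out solution. -/
theorem variation_hierarchy_above {n k : ℕ} (hkn : n < k)
    (X : Matrix (Fin n) (Fin k) ℝ) (hX : X.rank = n)
    (hXd : ∀ j : Fin k, (delCol X j).rank = n)
    (Y_A Y_B : Fin n → ℝ) (j : Fin k) :
    Real.sqrt (∑ i, (minNorm X Y_A i - minNorm X Y_B i) ^ 2) ≤
      Real.sqrt (∑ i, (minNormDel X j Y_A i - minNormDel X j Y_B i) ^ 2) := by
  have hu := gram_isUnit X hX
  have hdet := (Matrix.isUnit_iff_isUnit_det _).mp hu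
  set G := X * Xᵀ with hG
  set P := Xᵀ * G⁻¹ * X with hPdef
  have hGsym : Gᵀ = G := by rw [hG, Matrix.transpose_mul, Matrix.transpose_transpose]
  have hGinv_sym : (G⁻¹)ᵀ = G⁻¹ := by rw [Matrix.transpose_nonsing_inv, hGsym]
  have hsym : Pᵀ = P := by
    rw [hPdef, Matrix.transpose_mul, Matrix.transpose_mul, Matrix.transpose_transpose,
      hGinv_sym, Matrix.mul_assoc]
  have hid : P * P = P := by
    rw [hPdef]
    have : X * (Xᵀ * G⁻¹ * X) = X := by
      rw [← Matrix.mul_assoc, ← Matrix.mul_assoc, ← hG,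
        Matrix.mul_nonsing_inv _ hdet, Matrix.one_mul]
    calc Xᵀ * G⁻¹ * X * (Xᵀ * G⁻¹ * X)
        = Xᵀ * G⁻¹ * (X * (Xᵀ * G⁻¹ * X)) := by rw [Matrix.mul_assoc]
      _ = Xᵀ * G⁻¹ * X := by rw [this]
  -- P applied to any interpolating vector gives the min-norm solution
  have hproj : ∀ Y : Fin n → ℝ, P *ᵥ minNormDel X j Y = minNorm X Y := by
    intro Y
    rw [hPdef, Matrix.mul_assoc, ← Matrix.mulVec_mulVec, ← Matrix.mulVec_mulVec,
      minNormDel_interpolates X j (hXd j) Y]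
    rfl
  set dA := minNormDel X j Y_A
  set dB := minNormDel X j Y_B
  have hPd : P *ᵥ (dA - dB) = fun i => minNorm X Y_A i - minNorm X Y_B i := by
    rw [Matrix.mulVec_sub, hproj, hproj]; rfl
  apply Real.sqrt_le_sqrt
  calc ∑ i, (minNorm X Y_A i - minNorm X Y_B i) ^ 2
      = ∑ i, (P *ᵥ (dA - dB)) i ^ 2 := by rw [hPd]
    _ ≤ ∑ i, (dA - dB) i ^ 2 := proj_contract P hsym hid _
    _ = ∑ i, (minNormDel X j Y_A i - minNormDel X j Y_B i) ^ 2 := rfl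
end

section
/- Variance reduction in the interpolation regime: let X ∈ ℝ^{n×k} with k > n such that X and all X_{−j} have full row rank. Let Y be a square-integrable random vector in ℝ^n, β̂ = Xᵀ(XXᵀ)⁻¹Y, and β̂^{(−j)} the corresponding minimum-norm estimator using X_{−j}. Then trace Var(β̂) ≤ min_j trace Var(β̂^{(−j)}). -/
open Matrix BigOperators MeasureTheory

/-- Trace of the covariance matrix of a random vector: `∑_i Var(Z_i)`. -/
noncomputable def traceVar {Ω : Type*} [MeasurableSpace Ω] (μ : Measure Ω)
    {m : Type*} [Fintype m] (Z : Ω → m → ℝ) : ℝ :=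
  ∑ i, ∫ ω, (Z ω i - ∫ ω', Z ω' i ∂μ) ^ 2 ∂μ

/-- A square real matrix of full rank has invertible determinant. -/
lemma det_isUnit_of_rank_eq {n : ℕ} (A : Matrix (Fin n) (Fin n) ℝ) (h : A.rank = n) :
    IsUnit A.det := by
  rw [isUnit_iff_ne_zero]
  intro hdet
  obtain ⟨v, hv, hv0⟩ := Matrix.exists_mulVec_eq_zero_iff.mpr hdet
  have hsurj : Function.Surjective A.mulVecLin := by
    rw [← LinearMap.range_eq_top]
    apply Submodule.eq_top_of_finrank_eq
    rw [Module.finrank_fin_fun]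
    exact h
  have hinj : Function.Injective A.mulVecLin :=
    LinearMap.injective_iff_surjective.mpr hsurj
  apply hv
  have : A.mulVecLin v = A.mulVecLin 0 := by
    simpa [Matrix.mulVecLin_apply] using hv0
  simpa using hinj this

/-- Orthogonal projection contracts squared norm. -/
lemma proj_sq_sum_le {k : ℕ} (P : Matrix (Fin k) (Fin k) ℝ) (hsym : Pᵀ = P)
    (hid : P * P = P) (v : Fin k → ℝ) :
    ∑ i, (P *ᵥ v) i ^ 2 ≤ ∑ i, v i ^ 2 := by
  set w := P *ᵥ v with hw
  have key : w ⬝ᵥ w = v ⬝ᵥ w := by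
    have h1 : w ⬝ᵥ w = (w ᵥ* P) ⬝ᵥ v := by
      rw [hw, Matrix.dotProduct_mulVec]
    have h2 : w ᵥ* P = v ᵥ* P := by
      rw [hw, ← hsym, Matrix.mulVec_transpose, Matrix.vecMul_vecMul, hsym, hid]
    have h3 : v ⬝ᵥ w = (v ᵥ* P) ⬝ᵥ v := by
      rw [hw, Matrix.dotProduct_mulVec]
    rw [h1, h2, ← h3]
  have key' : ∑ i, w i ^ 2 = ∑ i, v i * w i := by
    simp only [dotProduct] at key
    calc ∑ i, w i ^ 2 = ∑ i, w i * w i := by simp [sq]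
      _ = ∑ i, v i * w i := key
  have hnn : (0:ℝ) ≤ ∑ i, (v i - w i) ^ 2 :=
    Finset.sum_nonneg fun i _ => sq_nonneg _
  have expand : ∑ i, (v i - w i) ^ 2
      = ∑ i, v i ^ 2 - 2 * ∑ i, v i * w i + ∑ i, w i ^ 2 := by
    rw [Finset.mul_sum, ← Finset.sum_sub_distrib, ← Finset.sum_add_distrib]
    exact Finset.sum_congr rfl fun i _ => by ring
  linarith [expand ▸ hnn]

/-- Interpolation: full row rank min-norm solution interpolates. -/
lemma mulVec_minNorm {n : ℕ} {m : Type*} [Fintype m] (M : Matrix (Fin n) m ℝ)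
    (h : IsUnit (M * Mᵀ).det) (Y : Fin n → ℝ) : M *ᵥ minNorm M Y = Y := by
  unfold minNorm
  rw [Matrix.mulVec_mulVec, Matrix.mulVec_mulVec,
    Matrix.mul_nonsing_inv _ h, Matrix.one_mulVec]

/-- Each coordinate of a fixed linear image of a square-integrable random vector
is square-integrable. -/
lemma memℒp_mulVec {n : ℕ} {Ω : Type*} [MeasurableSpace Ω] {μ : Measure Ω}
    {Y : Ω → Fin n → ℝ} (hY : ∀ i, MemLp (fun ω => Y ω i) 2 μ)
    {m : Type*} [Fintype m] (C : Matrix m (Fin n) ℝ) (i : m) :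
    MemLp (fun ω => (C *ᵥ Y ω) i) 2 μ := by
  simp only [Matrix.mulVec, dotProduct]
  exact memLp_finset_sum _ fun r _ => (hY r).const_mul _

/-- Variance reduction in the interpolation regime: the trace of the variance of
the minimum-norm interpolating estimator is at most that of every
leave-one-covariate-out estimator. -/
theorem variance_reduction_interpolation {n k : ℕ} (hkn : n < k)
    (X : Matrix (Fin n) (Fin k) ℝ) (hX : X.rank = n)
    (hXd : ∀ j : Fin k, (delCol X j).rank = n)
    {Ω : Type*} [MeasurableSpace Ω] (μ : Measure Ω) [IsProbabilityMeasure μ]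
    (Y : Ω → Fin n → ℝ) (hY : ∀ i, MemLp (fun ω => Y ω i) 2 μ) :
    ∀ j : Fin k,
      traceVar μ (fun ω => minNorm X (Y ω)) ≤
        traceVar μ (fun ω => minNormDel X j (Y ω)) := by
  intro j
  -- determinant units
  have hdet : IsUnit (X * Xᵀ).det := by
    apply det_isUnit_of_rank_eq
    rw [Matrix.rank_self_mul_transpose, hX]
  have hdetd : IsUnit (delCol X j * (delCol X j)ᵀ).det := by
    apply det_isUnit_of_rank_eq
    rw [Matrix.rank_self_mul_transpose, hXd j]
  -- the projection matrix
  set P : Matrix (Fin k) (Fin k) ℝ := Xᵀ * (X * Xᵀ)⁻¹ * X with hP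
  have hsym : Pᵀ = P := by
    rw [hP, Matrix.transpose_mul, Matrix.transpose_mul, Matrix.transpose_transpose,
      Matrix.transpose_nonsing_inv, Matrix.transpose_mul, Matrix.transpose_transpose,
      Matrix.mul_assoc]
  have hid : P * P = P := by
    rw [hP]
    calc (Xᵀ * (X * Xᵀ)⁻¹ * X) * (Xᵀ * (X * Xᵀ)⁻¹ * X)
        = Xᵀ * ((X * Xᵀ)⁻¹ * ((X * Xᵀ) * ((X * Xᵀ)⁻¹ * X))) := by
          simp only [Matrix.mul_assoc]
      _ = Xᵀ * (X * Xᵀ)⁻¹ * X := by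
          rw [Matrix.nonsing_inv_mul_cancel_left _ _ hdet, Matrix.mul_assoc]
  -- minNormDel interpolates
  have hinterp : ∀ ω, X *ᵥ minNormDel X j (Y ω) = Y ω := by
    intro ω
    funext r
    have hsplit : (X *ᵥ minNormDel X j (Y ω)) r
        = ∑ i : {i : Fin k // i ≠ j}, X r i.val * minNorm (delCol X j) (Y ω) i := by
      show (∑ i : Fin k, X r i * minNormDel X j (Y ω) i) = _
      rw [← Finset.sum_erase_add _ _ (Finset.mem_univ j)]
      have hj : X r j * minNormDel X j (Y ω) j = 0 := by
        simp [minNormDel]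
      rw [hj, add_zero]
      have e1 : ∀ i : {i : Fin k // i ≠ j},
          X r i.val * minNorm (delCol X j) (Y ω) i
            = X r i.val * minNormDel X j (Y ω) i.val := by
        intro i
        simp [minNormDel, i.prop]
      rw [show (∑ i : {i : Fin k // i ≠ j}, X r i.val * minNorm (delCol X j) (Y ω) i)
          = ∑ i : {i : Fin k // i ≠ j}, X r i.val * minNormDel X j (Y ω) i.val from
        Finset.sum_congr rfl fun i _ => e1 i]
      exact Finset.sum_subtype _ (fun i => by simp) fun i => X r i * minNormDel X j (Y ω) i
    have := congrFun (mulVec_minNorm (delCol X j) hdetd (Y ω)) r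
    rw [hsplit]
    simpa [delCol, Matrix.mulVec, dotProduct, Matrix.submatrix] using this
  -- the key identity: minNorm X = P applied to minNormDel
  have hproj : ∀ ω, minNorm X (Y ω) = P *ᵥ minNormDel X j (Y ω) := by
    intro ω
    rw [hP, Matrix.mul_assoc, ← Matrix.mulVec_mulVec, ← Matrix.mulVec_mulVec,
      hinterp ω]
    rfl
  -- integrability of coordinates
  have hWm : ∀ l, MemLp (fun ω => minNormDel X j (Y ω) l) 2 μ := by
    intro l
    by_cases h : l = j
    · simp only [minNormDel, dif_pos h]
      exact memLp_const 0
    · simp only [minNormDel, dif_neg h]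
      have : ∀ ω, minNorm (delCol X j) (Y ω) ⟨l, h⟩
          = (((delCol X j)ᵀ * (delCol X j * (delCol X j)ᵀ)⁻¹) *ᵥ Y ω) ⟨l, h⟩ := by
        intro ω; rw [← Matrix.mulVec_mulVec]; rfl
      simp only [this]
      exact memℒp_mulVec hY _ _
  have hWint : ∀ l, Integrable (fun ω => minNormDel X j (Y ω) l) μ :=
    fun l => (hWm l).integrable one_le_two
  -- mean vector of the deleted estimator
  set Ebar : Fin k → ℝ := fun l => ∫ ω, minNormDel X j (Y ω) l ∂μ with hEbar
  set Z : Ω → Fin k → ℝ := fun ω l => minNormDel X j (Y ω) l - Ebar l with hZ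
  have hZm : ∀ l, MemLp (fun ω => Z ω l) 2 μ :=
    fun l => (hWm l).sub (memLp_const (Ebar l))
  -- mean of minNorm X
  have hmean : ∀ i, (∫ ω, minNorm X (Y ω) i ∂μ) = (P *ᵥ Ebar) i := by
    intro i
    have h1 : ∀ ω, minNorm X (Y ω) i = ∑ l, P i l * minNormDel X j (Y ω) l := by
      intro ω; rw [hproj ω]; rfl
    simp only [h1]
    rw [integral_finset_sum _ (fun l _ => (hWint l).const_mul _)]
    simp only [integral_const_mul]
    rfl
  -- pointwise identity for the centered estimator
  have hdiff : ∀ ω i, minNorm X (Y ω) i - (∫ ω', minNorm X (Y ω') i ∂μ)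
      = (P *ᵥ Z ω) i := by
    intro ω i
    rw [hmean i, hproj ω]
    have : Z ω = minNormDel X j (Y ω) - Ebar := rfl
    rw [this, Matrix.mulVec_sub]
    rfl
  -- membership for projected coordinates
  have hPZm : ∀ i, MemLp (fun ω => (P *ᵥ Z ω) i) 2 μ := by
    intro i
    have : ∀ ω, (P *ᵥ Z ω) i = ∑ l, P i l * Z ω l := fun ω => rfl
    simp only [this]
    exact memLp_finset_sum _ fun l _ => (hZm l).const_mul _
  have hPZsq : ∀ i, Integrable (fun ω => (P *ᵥ Z ω) i ^ 2) μ :=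
    fun i => (hPZm i).integrable_sq
  have hZsq : ∀ l, Integrable (fun ω => Z ω l ^ 2) μ :=
    fun l => (hZm l).integrable_sq
  -- put everything together
  have lhs_eq : traceVar μ (fun ω => minNorm X (Y ω))
      = ∫ ω, ∑ i, (P *ᵥ Z ω) i ^ 2 ∂μ := by
    unfold traceVar
    rw [integral_finset_sum _ (fun i _ => hPZsq i)]
    refine Finset.sum_congr rfl fun i _ => ?_
    refine integral_congr_ae (Filter.Eventually.of_forall fun ω => ?_)
    exact congrArg (· ^ 2) (hdiff ω i)
  have rhs_eq : traceVar μ (fun ω => minNormDel X j (Y ω))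
      = ∫ ω, ∑ l, Z ω l ^ 2 ∂μ := by
    unfold traceVar
    rw [integral_finset_sum _ (fun l _ => hZsq l)]
  rw [lhs_eq, rhs_eq]
  refine integral_mono (integrable_finset_sum _ fun i _ => hPZsq i)
    (integrable_finset_sum _ fun l _ => hZsq l) fun ω => ?_
  exact proj_sq_sum_le P hsym hid (Z ω)
end

section
/- Model-agnostic risk bound: let J be a finite index set, let λ̂ : Ω → [0,1]^J be a (random) weight vector summing to 1, and f̂_j : Ω → (𝒳 → ℝ) random functions, with f̂* = Σ_j λ̂_j f̂_j. Suppose for every permutation π of J, E[(y − f̂*(x))²] ≤ E[(y − f̂*_π(x))²] where f̂*_π = Σ_j λ̂_{π(j)} f̂_j. Then E[(y − f̂*(x))²] ≤ (1/|J|) Σ_{j∈J} E[(y − f̂_j(x))²]. -/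
open BigOperators MeasureTheory

lemma perm_fiber_card_mul {J : Type*} [Fintype J] [DecidableEq J] (j k : J) :
    (Finset.univ.filter fun π : Equiv.Perm J => π j = k).card * Fintype.card J
      = Fintype.card (Equiv.Perm J) := by
  have hconst : ∀ k' : J,
      (Finset.univ.filter fun π : Equiv.Perm J => π j = k').card
        = (Finset.univ.filter fun π : Equiv.Perm J => π j = k).card := by
    intro k'
    apply Finset.card_bij' (fun π _ => Equiv.swap k' k * π)
      (fun π _ => Equiv.swap k' k * π)
    · intro π hπ
      simp only [Finset.mem_filter, Finset.mem_univ, true_and] at hπ ⊢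
      simp [hπ]
    · intro π hπ
      simp only [Finset.mem_filter, Finset.mem_univ, true_and] at hπ ⊢
      simp [hπ]
    · intro π _
      simp [← mul_assoc]
    · intro π _
      simp [← mul_assoc]
  have hsum : ∑ k' : J, (Finset.univ.filter fun π : Equiv.Perm J => π j = k').card
      = Fintype.card (Equiv.Perm J) := by
    have h := Finset.card_eq_sum_card_fiberwise
      (s := (Finset.univ : Finset (Equiv.Perm J))) (t := (Finset.univ : Finset J))
      (f := fun π => π j) (fun π _ => Finset.mem_univ (π j))
    rw [Finset.card_univ] at h
    exact h.symm
  rw [← hsum]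
  simp only [hconst]
  rw [Finset.sum_const, Finset.card_univ, smul_eq_mul, mul_comm]

lemma sum_perm_apply {J : Type*} [Fintype J] [Nonempty J] [DecidableEq J]
    (j : J) (g : J → ℝ) :
    ∑ π : Equiv.Perm J, g (π j)
      = ((Fintype.card (Equiv.Perm J) : ℝ) / (Fintype.card J : ℝ)) * ∑ k, g k := by
  have hn : (0 : ℝ) < (Fintype.card J : ℝ) := by
    exact_mod_cast Fintype.card_pos
  have h1 : ∑ π : Equiv.Perm J, g (π j)
      = ∑ k : J, ∑ π ∈ Finset.univ.filter fun π : Equiv.Perm J => π j = k, g (π j) :=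
    (Finset.sum_fiberwise (Finset.univ : Finset (Equiv.Perm J))
      (fun π => π j) (fun π => g (π j))).symm
  rw [h1]
  have h2 : ∀ k : J,
      ∑ π ∈ Finset.univ.filter (fun π : Equiv.Perm J => π j = k), g (π j)
        = ((Fintype.card (Equiv.Perm J) : ℝ) / (Fintype.card J : ℝ)) * g k := by
    intro k
    have h3 : ∑ π ∈ Finset.univ.filter (fun π : Equiv.Perm J => π j = k), g (π j)
        = ((Finset.univ.filter fun π : Equiv.Perm J => π j = k).card : ℝ) * g k := by
      rw [Finset.sum_congr rfl (fun π hπ => by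
        simp only [Finset.mem_filter] at hπ; rw [hπ.2])]
      rw [Finset.sum_const, nsmul_eq_mul]
    rw [h3]
    congr 1
    have := perm_fiber_card_mul j k
    have hcast : ((Finset.univ.filter fun π : Equiv.Perm J => π j = k).card : ℝ)
        * (Fintype.card J : ℝ) = (Fintype.card (Equiv.Perm J) : ℝ) := by
      exact_mod_cast congrArg (Nat.cast : ℕ → ℝ) this
    field_simp
    linarith [hcast]
  rw [Finset.sum_congr rfl (fun k _ => h2 k), ← Finset.mul_sum]

/-- Model-agnostic risk bound: if the realized weighting is (in expectation) no
worse than any permuted weighting, then the risk of the model average is at most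
the equal-weighted average of the risks of the simple models. -/
theorem model_agnostic_risk_bound {J : Type*} [Fintype J] [Nonempty J]
    {𝒳 : Type*} {Ω : Type*} [MeasurableSpace Ω]
    (μ : Measure Ω) [IsProbabilityMeasure μ]
    (lam : Ω → J → ℝ) (f : J → Ω → 𝒳 → ℝ) (y : Ω → ℝ) (x : Ω → 𝒳)
    (hlam : ∀ᵐ ω ∂μ, (∀ j, lam ω j ∈ Set.Icc (0 : ℝ) 1) ∧ ∑ j, lam ω j = 1)
    (hint : ∀ j, Integrable (fun ω => (y ω - f j ω (x ω)) ^ 2) μ)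
    (hintπ : ∀ π : Equiv.Perm J,
      Integrable (fun ω => (y ω - ∑ j, lam ω (π j) * f j ω (x ω)) ^ 2) μ)
    (hperm : ∀ π : Equiv.Perm J,
      ∫ ω, (y ω - ∑ j, lam ω j * f j ω (x ω)) ^ 2 ∂μ ≤
        ∫ ω, (y ω - ∑ j, lam ω (π j) * f j ω (x ω)) ^ 2 ∂μ) :
    ∫ ω, (y ω - ∑ j, lam ω j * f j ω (x ω)) ^ 2 ∂μ ≤
      (1 / (Fintype.card J : ℝ)) * ∑ j, ∫ ω, (y ω - f j ω (x ω)) ^ 2 ∂μ := by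
  classical
  set R : ℝ := ∫ ω, (y ω - ∑ j, lam ω j * f j ω (x ω)) ^ 2 ∂μ with hR
  set S : ℝ := ∑ j, ∫ ω, (y ω - f j ω (x ω)) ^ 2 ∂μ with hS
  have hn : (0 : ℝ) < (Fintype.card J : ℝ) := by exact_mod_cast Fintype.card_pos
  have hN : (0 : ℝ) < (Fintype.card (Equiv.Perm J) : ℝ) := by
    exact_mod_cast Fintype.card_pos
  set N : ℝ := (Fintype.card (Equiv.Perm J) : ℝ) with hNdef
  -- pointwise a.e. bound after summing over all permutations
  have key : ∀ᵐ ω ∂μ,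
      ∑ π : Equiv.Perm J, (y ω - ∑ j, lam ω (π j) * f j ω (x ω)) ^ 2
        ≤ (N / (Fintype.card J : ℝ)) * ∑ j, (y ω - f j ω (x ω)) ^ 2 := by
    filter_upwards [hlam] with ω hω
    obtain ⟨h0, h1⟩ := hω
    have step1 : ∀ π : Equiv.Perm J,
        (y ω - ∑ j, lam ω (π j) * f j ω (x ω)) ^ 2
          ≤ ∑ j, lam ω (π j) * (y ω - f j ω (x ω)) ^ 2 := by
      intro π
      have hsum : ∑ j, lam ω (π j) = 1 := by
        rw [Equiv.sum_comp π (lam ω)]; exact h1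
      have hrw : y ω - ∑ j, lam ω (π j) * f j ω (x ω)
          = ∑ j, lam ω (π j) * (y ω - f j ω (x ω)) := by
        simp only [mul_sub]
        rw [Finset.sum_sub_distrib, ← Finset.sum_mul, hsum, one_mul]
      rw [hrw]
      have hjen := (Even.convexOn_pow (by norm_num : Even 2)).map_sum_le
        (t := (Finset.univ : Finset J)) (w := fun j => lam ω (π j))
        (p := fun j => y ω - f j ω (x ω))
        (fun j _ => (h0 (π j)).1) hsum (fun j _ => Set.mem_univ _)
      simpa [smul_eq_mul] using hjen
    calc ∑ π : Equiv.Perm J, (y ω - ∑ j, lam ω (π j) * f j ω (x ω)) ^ 2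
        ≤ ∑ π : Equiv.Perm J, ∑ j, lam ω (π j) * (y ω - f j ω (x ω)) ^ 2 :=
          Finset.sum_le_sum fun π _ => step1 π
      _ = ∑ j, ∑ π : Equiv.Perm J, lam ω (π j) * (y ω - f j ω (x ω)) ^ 2 :=
          Finset.sum_comm
      _ = ∑ j, (∑ π : Equiv.Perm J, lam ω (π j)) * (y ω - f j ω (x ω)) ^ 2 := by
          simp [Finset.sum_mul]
      _ = ∑ j, (N / (Fintype.card J : ℝ)) * (y ω - f j ω (x ω)) ^ 2 := by
          refine Finset.sum_congr rfl fun j _ => ?_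
          rw [sum_perm_apply j (lam ω), h1, mul_one]
      _ = (N / (Fintype.card J : ℝ)) * ∑ j, (y ω - f j ω (x ω)) ^ 2 := by
          rw [Finset.mul_sum]
  -- integrate
  have hint1 : Integrable
      (fun ω => ∑ π : Equiv.Perm J, (y ω - ∑ j, lam ω (π j) * f j ω (x ω)) ^ 2) μ :=
    integrable_finset_sum _ fun π _ => hintπ π
  have hint2 : Integrable
      (fun ω => (N / (Fintype.card J : ℝ)) * ∑ j, (y ω - f j ω (x ω)) ^ 2) μ :=
    (integrable_finset_sum _ fun j _ => hint j).const_mul _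
  have hmain : N * R ≤ (N / (Fintype.card J : ℝ)) * S := by
    calc N * R = ∑ _π : Equiv.Perm J, R := by
          rw [Finset.sum_const, nsmul_eq_mul]; rfl
      _ ≤ ∑ π : Equiv.Perm J, ∫ ω, (y ω - ∑ j, lam ω (π j) * f j ω (x ω)) ^ 2 ∂μ :=
          Finset.sum_le_sum fun π _ => hperm π
      _ = ∫ ω, ∑ π : Equiv.Perm J, (y ω - ∑ j, lam ω (π j) * f j ω (x ω)) ^ 2 ∂μ :=
          (integral_finset_sum _ fun π _ => hintπ π).symm
      _ ≤ ∫ ω, (N / (Fintype.card J : ℝ)) * ∑ j, (y ω - f j ω (x ω)) ^ 2 ∂μ :=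
          integral_mono_ae hint1 hint2 key
      _ = (N / (Fintype.card J : ℝ)) * S := by
          rw [integral_const_mul, integral_finset_sum _ fun j _ => hint j]
  have : N * R ≤ N * ((1 / (Fintype.card J : ℝ)) * S) := by
    calc N * R ≤ (N / (Fintype.card J : ℝ)) * S := hmain
      _ = N * ((1 / (Fintype.card J : ℝ)) * S) := by ring
  exact le_of_mul_le_mul_left this hN
end

section
/- Model averaging for synthetic control (fitted values, via Farkas): let X ∈ ℝ^{T×N}, let ȳ ∈ ℝ^T, and for each subset S ⊆ J let ŵ^S be the unique minimizer of ‖Xw − ȳ‖² over the simplex 𝒲^S when the minimizer is unique (e.g. after an arbitrarily small ridge perturbation making the objective strictly convex in w). If |J| ≥ 2, then there exist λ_j ≥ 0, j ∈ J, such that Xŵ^J = Σ_{j∈J} λ_j Xŵ^{J∖{j}}. -/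
open Matrix BigOperators

/-- The simplex of convex weight vectors supported on `J`. -/
def simplexW {N : ℕ} (J : Finset (Fin N)) : Set (Fin N → ℝ) :=
  {w | (∀ i, w i ∈ Set.Icc (0 : ℝ) 1) ∧ (∑ i, w i) = 1 ∧ ∀ j ∉ J, w j = 0}

lemma quad_nonneg (a b : ℝ) (h : ∀ t : ℝ, 0 < t → t ≤ 1 → 0 ≤ a * t + b * t ^ 2) : 0 ≤ a := by
  by_contra hneg
  push_neg at hneg
  set t : ℝ := min 1 (-a / (|b| + 1)) with ht
  have hb1 : (0:ℝ) < |b| + 1 := by positivity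
  have htpos : 0 < t := lt_min one_pos (div_pos (by linarith) hb1)
  have ht1 : t ≤ 1 := min_le_left _ _
  have ht2 : t ≤ -a / (|b| + 1) := min_le_right _ _
  have h1 := h t htpos ht1
  have hbt : b * t ≤ |b| * t := mul_le_mul_of_nonneg_right (le_abs_self b) htpos.le
  have h2 : |b| * t ≤ |b| * (-a / (|b| + 1)) :=
    mul_le_mul_of_nonneg_left ht2 (abs_nonneg b)
  have h3 : a + b * t ≤ a + |b| * (-a / (|b| + 1)) := by linarith
  have h4 : a + |b| * (-a / (|b| + 1)) = a / (|b| + 1) := by field_simp; ring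
  have h5 : a / (|b| + 1) < 0 := div_neg_of_neg_of_pos hneg hb1
  nlinarith [mul_pos htpos htpos]

lemma simplexW_mono {N : ℕ} {S S' : Finset (Fin N)} (h : S ⊆ S') :
    simplexW S ⊆ simplexW S' := by
  rintro w ⟨h1, h2, h3⟩
  exact ⟨h1, h2, fun j hj => h3 j (fun hjS => hj (h hjS))⟩

lemma seg_mem {N : ℕ} {S : Finset (Fin N)} {w v : Fin N → ℝ}
    (hw : w ∈ simplexW S) (hv : v ∈ simplexW S) {t : ℝ} (h0 : 0 ≤ t) (h1 : t ≤ 1) :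
    (fun i => w i + t * (v i - w i)) ∈ simplexW S := by
  obtain ⟨hw1, hw2, hw3⟩ := hw
  obtain ⟨hv1, hv2, hv3⟩ := hv
  refine ⟨fun i => ?_, ?_, fun j hj => by simp [hw3 j hj, hv3 j hj]⟩
  · obtain ⟨a1, a2⟩ := hw1 i
    obtain ⟨b1, b2⟩ := hv1 i
    constructor <;> simp only [] <;> nlinarith
  · rw [Finset.sum_add_distrib, ← Finset.mul_sum, Finset.sum_sub_distrib, hw2, hv2]
    ring

lemma e_mem {N : ℕ} {S : Finset (Fin N)} {j : Fin N} (hj : j ∈ S) :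
    (fun k => if k = j then (1:ℝ) else 0) ∈ simplexW S := by
  refine ⟨fun i => ?_, ?_, fun k hk => ?_⟩
  · by_cases h : i = j <;> simp [h]
  · simp
  · have : k ≠ j := fun h => hk (h ▸ hj)
    simp [this]

lemma mulVec_seg {T N : ℕ} (X : Matrix (Fin T) (Fin N) ℝ) (w v : Fin N → ℝ) (t : ℝ)
    (s : Fin T) : (X *ᵥ (fun i => w i + t * (v i - w i))) s
      = (X *ᵥ w) s + t * ((X *ᵥ v) s - (X *ᵥ w) s) := by
  simp only [mulVec, dotProduct]
  rw [show ∑ k, X s k * (w k + t * (v k - w k))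
      = ∑ k, (X s k * w k + t * (X s k * v k - X s k * w k)) from
    Finset.sum_congr rfl (fun k _ => by ring)]
  rw [Finset.sum_add_distrib, ← Finset.mul_sum, Finset.sum_sub_distrib]

lemma vi_min {T N : ℕ} (X : Matrix (Fin T) (Fin N) ℝ) (y : Fin T → ℝ)
    (S : Finset (Fin N)) (w : Fin N → ℝ) (hw : w ∈ simplexW S)
    (hmin : ∀ w' ∈ simplexW S,
      ∑ t, ((X *ᵥ w) t - y t) ^ 2 ≤ ∑ t, ((X *ᵥ w') t - y t) ^ 2)
    (v : Fin N → ℝ) (hv : v ∈ simplexW S) :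
    0 ≤ ∑ t, ((X *ᵥ w) t - y t) * ((X *ᵥ v) t - (X *ᵥ w) t) := by
  have key : ∀ t : ℝ, 0 < t → t ≤ 1 →
      0 ≤ (2 * ∑ s, ((X *ᵥ w) s - y s) * ((X *ᵥ v) s - (X *ᵥ w) s)) * t
        + (∑ s, ((X *ᵥ v) s - (X *ᵥ w) s) ^ 2) * t ^ 2 := by
    intro t ht0 ht1
    have hmem := seg_mem hw hv ht0.le ht1
    have h := hmin _ hmem
    have hexp : ∀ s, ((X *ᵥ fun i => w i + t * (v i - w i)) s - y s) ^ 2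
        = ((X *ᵥ w) s - y s) ^ 2
          + 2 * (((X *ᵥ w) s - y s) * ((X *ᵥ v) s - (X *ᵥ w) s)) * t
          + ((X *ᵥ v) s - (X *ᵥ w) s) ^ 2 * t ^ 2 := by
      intro s; rw [mulVec_seg]; ring
    rw [Finset.sum_congr rfl (fun s _ => hexp s)] at h
    rw [Finset.sum_add_distrib, Finset.sum_add_distrib] at h
    rw [← Finset.sum_mul, ← Finset.sum_mul, ← Finset.mul_sum] at h
    linarith
  have := quad_nonneg _ _ key
  linarith

lemma simplexW_isCompact {N : ℕ} (S : Finset (Fin N)) : IsCompact (simplexW S) := by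
  apply Metric.isCompact_of_isClosed_isBounded
  · have h1 : IsClosed {w : Fin N → ℝ | ∀ i, w i ∈ Set.Icc (0:ℝ) 1} := by
      have he : {w : Fin N → ℝ | ∀ i, w i ∈ Set.Icc (0:ℝ) 1}
          = ⋂ i, (fun w : Fin N → ℝ => w i) ⁻¹' Set.Icc (0:ℝ) 1 := by ext w; simp
      rw [he]
      exact isClosed_iInter fun i => IsClosed.preimage (continuous_apply i) isClosed_Icc
    have h2 : IsClosed {w : Fin N → ℝ | (∑ i, w i) = 1} :=
      isClosed_eq (by continuity) continuous_const
    have h3 : IsClosed {w : Fin N → ℝ | ∀ j ∉ S, w j = 0} := by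
      have he : {w : Fin N → ℝ | ∀ j ∉ S, w j = 0}
          = ⋂ j, ⋂ (_ : j ∉ S), (fun w : Fin N → ℝ => w j) ⁻¹' {0} := by ext w; simp
      rw [he]
      exact isClosed_iInter fun j => isClosed_iInter fun _ =>
        IsClosed.preimage (continuous_apply j) isClosed_singleton
    have he : simplexW S = ({w : Fin N → ℝ | ∀ i, w i ∈ Set.Icc (0:ℝ) 1}
        ∩ {w : Fin N → ℝ | (∑ i, w i) = 1}) ∩ {w : Fin N → ℝ | ∀ j ∉ S, w j = 0} := by
      ext w; simp [simplexW, and_assoc]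
    rw [he]; exact (h1.inter h2).inter h3
  · apply Bornology.IsBounded.subset (Metric.isBounded_closedBall (x := (0 : Fin N → ℝ)) (r := 1))
    rintro w ⟨hw1, -, -⟩
    rw [Metric.mem_closedBall, dist_zero_right]
    refine (pi_norm_le_iff_of_nonneg zero_le_one).2 fun i => ?_
    rw [Real.norm_eq_abs, abs_le]
    exact ⟨by linarith [(hw1 i).1], (hw1 i).2⟩

lemma simplexW_exists_min {T N : ℕ} (D : Matrix (Fin T) (Fin N) ℝ) (y : Fin T → ℝ)
    (S : Finset (Fin N)) (hS : S.Nonempty) :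
    ∃ u ∈ simplexW S, ∀ v ∈ simplexW S,
      ∑ s, ((D *ᵥ u) s - y s) ^ 2 ≤ ∑ s, ((D *ᵥ v) s - y s) ^ 2 := by
  obtain ⟨j, hj⟩ := hS
  have hne : (simplexW S).Nonempty := by
    refine ⟨fun k => if k = j then (1:ℝ) else 0, fun i => ?_, by simp, fun k hk => ?_⟩
    · by_cases h : i = j <;> simp [h]
    · have : k ≠ j := fun h => hk (h ▸ hj); simp [this]
  have hcont : Continuous (fun u : Fin N → ℝ => ∑ s, ((D *ᵥ u) s - y s) ^ 2) := by
    apply continuous_finset_sum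
    intro s _
    apply Continuous.pow
    apply Continuous.sub ?_ continuous_const
    simp only [mulVec, dotProduct]
    exact continuous_finset_sum _ fun k _ => continuous_const.mul (continuous_apply k)
  obtain ⟨u, hu, hmin⟩ := (simplexW_isCompact S).exists_isMinOn hne hcont.continuousOn
  exact ⟨u, hu, fun v hv => hmin hv⟩


lemma mulVec_single_col {T N : ℕ} (X : Matrix (Fin T) (Fin N) ℝ) (i : Fin N) (s : Fin T) :
    (X *ᵥ fun k => if k = i then (1:ℝ) else 0) s = X s i := by
  simp [mulVec, dotProduct, mul_ite, Finset.sum_ite_eq']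

/-- Model averaging for synthetic control at the level of fitted values: the
fitted value of the unique constrained projection onto the full simplex lies in
the conical hull of the fitted values of the leave-one-out constrained
projections. -/
theorem synth_fitted_model_averaging {T N : ℕ}
    (X : Matrix (Fin T) (Fin N) ℝ) (ybar : Fin T → ℝ)
    (J : Finset (Fin N)) (hJ : 2 ≤ J.card)
    (wJ : Fin N → ℝ) (hwJ : wJ ∈ simplexW J)
    (hwJmin : ∀ w ∈ simplexW J,
      ∑ t, ((X *ᵥ wJ) t - ybar t) ^ 2 ≤ ∑ t, ((X *ᵥ w) t - ybar t) ^ 2)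
    (hwJuniq : ∀ w ∈ simplexW J,
      (∀ w' ∈ simplexW J,
        ∑ t, ((X *ᵥ w) t - ybar t) ^ 2 ≤ ∑ t, ((X *ᵥ w') t - ybar t) ^ 2) →
      w = wJ)
    (wdel : Fin N → (Fin N → ℝ))
    (hwdel : ∀ j ∈ J, wdel j ∈ simplexW (J.erase j))
    (hwdelmin : ∀ j ∈ J, ∀ w ∈ simplexW (J.erase j),
      ∑ t, ((X *ᵥ wdel j) t - ybar t) ^ 2 ≤ ∑ t, ((X *ᵥ w) t - ybar t) ^ 2)
    (hwdeluniq : ∀ j ∈ J, ∀ w ∈ simplexW (J.erase j),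
      (∀ w' ∈ simplexW (J.erase j),
        ∑ t, ((X *ᵥ w) t - ybar t) ^ 2 ≤ ∑ t, ((X *ᵥ w') t - ybar t) ^ 2) →
      w = wdel j) :
    ∃ lam : Fin N → ℝ, (∀ j ∈ J, 0 ≤ lam j) ∧
      X *ᵥ wJ = ∑ j ∈ J, lam j • (X *ᵥ wdel j) := by
  classical
  by_cases hA : ∃ j ∈ J, wJ j = 0
  · obtain ⟨j, hj, hj0⟩ := hA
    have hmemE : wJ ∈ simplexW (J.erase j) := by
      refine ⟨hwJ.1, hwJ.2.1, fun k hk => ?_⟩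
      by_cases hkj : k = j
      · exact hkj ▸ hj0
      · exact hwJ.2.2 k (fun hkJ => hk (Finset.mem_erase.mpr ⟨hkj, hkJ⟩))
    have heq : wJ = wdel j :=
      hwdeluniq j hj wJ hmemE
        (fun w hw => hwJmin w (simplexW_mono (J.erase_subset j) hw))
    refine ⟨fun k => if k = j then 1 else 0, fun k _ => by dsimp only; split <;> norm_num, ?_⟩
    rw [show ∑ k ∈ J, (if k = j then (1:ℝ) else 0) • (X *ᵥ wdel k)
        = X *ᵥ wdel j by simp [ite_smul, Finset.sum_ite_eq', hj]]
    rw [heq]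
  · push_neg at hA
    have hpos : ∀ j ∈ J, 0 < wJ j :=
      fun j hj => lt_of_le_of_ne (hwJ.1 j).1 (Ne.symm (hA j hj))
    have hJne : J.Nonempty := Finset.card_pos.mp (by omega)
    set yh := X *ᵥ wJ with hyh
    -- restriction helper
    have hrestrict : ∀ (w : Fin N → ℝ), (∀ k ∉ J, w k = 0) → ∀ (f : Fin N → ℝ),
        ∑ k ∈ J, w k * f k = ∑ k, w k * f k := by
      intro w hw f
      exact Finset.sum_subset J.subset_univ (fun k _ hk => by rw [hw k hk, zero_mul])
    have hrestrict1 : ∀ (w : Fin N → ℝ), (∀ k ∉ J, w k = 0) → (∑ k, w k) = 1 →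
        ∑ k ∈ J, w k = 1 := by
      intro w hw h1
      rw [← h1]
      exact Finset.sum_subset J.subset_univ (fun k _ hk => hw k hk)
    -- key: for any simplex-like w, ∑_{i∈J} w i * (X s i - yh s) = (X *ᵥ w) s - yh s
    have hkey : ∀ (w : Fin N → ℝ), (∀ k ∉ J, w k = 0) → (∑ k, w k) = 1 →
        ∀ s, ∑ i ∈ J, w i * (X s i - yh s) = (X *ᵥ w) s - yh s := by
      intro w hw h1 s
      have e1 : ∑ i ∈ J, w i * (X s i - yh s)
          = (∑ i ∈ J, w i * X s i) - (∑ i ∈ J, w i) * yh s := by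
        rw [Finset.sum_mul, ← Finset.sum_sub_distrib]
        exact Finset.sum_congr rfl fun i _ => by ring
      rw [e1, hrestrict1 w hw h1, hrestrict w hw (fun i => X s i), one_mul]
      congr 1
      simp only [mulVec, dotProduct]
      exact Finset.sum_congr rfl fun k _ => mul_comm _ _
    have ha0 : ∀ s, ∑ i ∈ J, wJ i * (X s i - yh s) = 0 := by
      intro s
      rw [hkey wJ hwJ.2.2 hwJ.2.1 s]; simp [hyh]
    -- VI for wJ at basis vectors
    have hVI : ∀ i ∈ J, 0 ≤ ∑ s, (yh s - ybar s) * (X s i - yh s) := by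
      intro i hi
      have h := vi_min X ybar J wJ hwJ hwJmin _ (e_mem hi)
      rw [Finset.sum_congr rfl fun s _ => by rw [mulVec_single_col]] at h
      exact h
    have hzero : ∑ i ∈ J, wJ i * (∑ s, (yh s - ybar s) * (X s i - yh s)) = 0 := by
      have e1 : ∀ i, wJ i * (∑ s, (yh s - ybar s) * (X s i - yh s))
          = ∑ s, (yh s - ybar s) * (wJ i * (X s i - yh s)) := by
        intro i
        rw [Finset.mul_sum]
        exact Finset.sum_congr rfl fun s _ => by ring
      rw [Finset.sum_congr rfl fun i _ => e1 i, Finset.sum_comm]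
      rw [Finset.sum_congr rfl fun s _ => by
        rw [← Finset.mul_sum, ha0 s, mul_zero]]
      simp
    have h1 : ∀ i ∈ J, ∑ s, (yh s - ybar s) * (X s i - yh s) = 0 := by
      intro i hi
      have hterm := (Finset.sum_eq_zero_iff_of_nonneg
        (fun i hi => mul_nonneg (hpos i hi).le (hVI i hi))).1 hzero i hi
      exact (mul_eq_zero.mp hterm).resolve_left (ne_of_gt (hpos i hi))
    -- leave-one-out differences
    set d : Fin N → Fin T → ℝ := fun j s => (X *ᵥ wdel j) s - yh s with hd
    have hwdel0 : ∀ j ∈ J, ∀ k ∉ J, wdel j k = 0 := fun j hj k hk =>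
      (hwdel j hj).2.2 k (fun hm => hk (Finset.mem_of_mem_erase hm))
    have hddecomp : ∀ j ∈ J, ∀ s,
        d j s = ∑ i ∈ J, (wdel j i - wJ i) * (X s i - yh s) := by
      intro j hj s
      have e1 : ∑ i ∈ J, (wdel j i - wJ i) * (X s i - yh s)
          = (∑ i ∈ J, wdel j i * (X s i - yh s)) - ∑ i ∈ J, wJ i * (X s i - yh s) := by
        rw [← Finset.sum_sub_distrib]
        exact Finset.sum_congr rfl fun i _ => by ring
      rw [e1, ha0 s, hkey (wdel j) (hwdel0 j hj) (hwdel j hj).2.1 s, sub_zero]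
    have hgd : ∀ j ∈ J, ∑ s, (yh s - ybar s) * d j s = 0 := by
      intro j hj
      rw [Finset.sum_congr rfl fun s _ => by
        rw [hddecomp j hj s, Finset.mul_sum]]
      rw [Finset.sum_comm]
      apply Finset.sum_eq_zero
      intro i hi
      have e1 : ∀ s, (yh s - ybar s) * ((wdel j i - wJ i) * (X s i - yh s))
          = (wdel j i - wJ i) * ((yh s - ybar s) * (X s i - yh s)) := fun s => by ring
      rw [Finset.sum_congr rfl fun s _ => e1 s, ← Finset.mul_sum, h1 i hi, mul_zero]
    -- facet variational inequality
    have h2 : ∀ j ∈ J, ∀ i ∈ J, i ≠ j → 0 ≤ ∑ s, d j s * (X s i - yh s) := by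
      intro j hj i hi hij
      have hiE : i ∈ J.erase j := Finset.mem_erase.mpr ⟨hij, hi⟩
      have hvi := vi_min X ybar (J.erase j) (wdel j) (hwdel j hj) (hwdelmin j hj)
        _ (e_mem hiE)
      rw [Finset.sum_congr rfl fun s _ => by rw [mulVec_single_col]] at hvi
      have hexp : ∀ s, ((X *ᵥ wdel j) s - ybar s) * (X s i - (X *ᵥ wdel j) s)
          = d j s * (X s i - yh s) - (d j s) ^ 2
            + (yh s - ybar s) * (X s i - yh s) - (yh s - ybar s) * d j s := by
        intro s; simp only [hd]; ring
      rw [Finset.sum_congr rfl fun s _ => hexp s] at hvi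
      rw [Finset.sum_sub_distrib, Finset.sum_add_distrib, Finset.sum_sub_distrib] at hvi
      rw [h1 i hi, hgd j hj] at hvi
      have hsq : 0 ≤ ∑ s, (d j s) ^ 2 := Finset.sum_nonneg fun s _ => sq_nonneg _
      linarith
    -- minimize the norm of convex combinations of the d's
    set DM : Matrix (Fin T) (Fin N) ℝ := Matrix.of (fun s j => d j s) with hDM
    obtain ⟨u, hu, humin⟩ := simplexW_exists_min DM 0 J hJne
    set p := DM *ᵥ u with hp
    have hpJ : ∀ s, p s = ∑ j ∈ J, u j * d j s := by
      intro s
      rw [hp]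
      simp only [mulVec, dotProduct, hDM, Matrix.of_apply]
      rw [hrestrict u hu.2.2 (fun k => d k s)]
      exact Finset.sum_congr rfl fun k _ => mul_comm _ _
    have hpVI : ∀ j ∈ J, 0 ≤ ∑ s, p s * (d j s - p s) := by
      intro j hj
      have h := vi_min DM 0 J u hu humin _ (e_mem hj)
      simp only [Pi.zero_apply, sub_zero] at h
      rw [Finset.sum_congr rfl fun s _ => by rw [mulVec_single_col]] at h
      exact h
    have hsumu : ∑ j ∈ J, u j = 1 := hrestrict1 u hu.2.2 hu.2.1
    by_cases hp0 : ∀ s, p s = 0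
    · refine ⟨u, fun j hj => (hu.1 j).1, ?_⟩
      funext s
      rw [Finset.sum_apply]
      have e1 : ∀ j ∈ J, (u j • (X *ᵥ wdel j)) s = u j * yh s + u j * d j s := by
        intro j hj
        simp only [Pi.smul_apply, smul_eq_mul, hd]
        ring
      rw [Finset.sum_congr rfl e1, Finset.sum_add_distrib, ← Finset.sum_mul, hsumu,
        ← hpJ s, hp0 s]
      simp [hyh]
    · exfalso
      push_neg at hp0
      obtain ⟨s0, hs0⟩ := hp0
      have hppos : 0 < ∑ s, (p s) ^ 2 := by
        apply Finset.sum_pos' (fun s _ => sq_nonneg _)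
        refine ⟨s0, Finset.mem_univ s0, ?_⟩
        rw [← sq_abs]
        exact pow_pos (abs_pos.mpr hs0) 2
      have hpd : ∀ j ∈ J, 0 < ∑ s, p s * d j s := by
        intro j hj
        have h := hpVI j hj
        rw [Finset.sum_congr rfl (fun s _ => mul_sub (p s) (d j s) (p s)),
          Finset.sum_sub_distrib] at h
        have e2 : ∑ s, p s * p s = ∑ s, (p s) ^ 2 :=
          Finset.sum_congr rfl fun s _ => (sq (p s)).symm
        rw [e2] at h
        linarith
      -- the argmax trick
      set bet : Fin N → ℝ := fun i => ∑ j ∈ J, u j * (wdel j i - wJ i) with hbet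
      obtain ⟨jm, hjm, hmax⟩ := Finset.exists_max_image J (fun i => bet i / wJ i) hJne
      set r := bet jm / wJ jm with hr
      set A : Fin N → ℝ := fun i => ∑ s, (X s i - yh s) * d jm s with hAdef
      have hA0 : ∑ i ∈ J, wJ i * A i = 0 := by
        have e1 : ∀ i ∈ J, wJ i * A i
            = ∑ s, (wJ i * (X s i - yh s)) * d jm s := by
          intro i _
          rw [hAdef, Finset.mul_sum]
          exact Finset.sum_congr rfl fun s _ => by ring
        rw [Finset.sum_congr rfl e1, Finset.sum_comm]
        apply Finset.sum_eq_zero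
        intro s _
        rw [← Finset.sum_mul, ha0 s, zero_mul]
      have hApos : ∀ i ∈ J, i ≠ jm → 0 ≤ A i := by
        intro i hi hijm
        have h := h2 jm hjm i hi hijm
        show 0 ≤ ∑ s, (X s i - yh s) * d jm s
        rw [Finset.sum_congr rfl fun s _ => mul_comm (X s i - yh s) (d jm s)]
        exact h
      have hident : ∑ s, p s * d jm s = ∑ i ∈ J, bet i * A i := by
        have step1 : ∑ s, p s * d jm s = ∑ j ∈ J, u j * ∑ s, d j s * d jm s := by
          rw [Finset.sum_congr rfl fun s _ => by
            rw [hpJ s, Finset.sum_mul]]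
          rw [Finset.sum_comm]
          exact Finset.sum_congr rfl fun j _ => by
            rw [Finset.mul_sum]
            exact Finset.sum_congr rfl fun s _ => by ring
        have step2 : ∀ j ∈ J, ∑ s, d j s * d jm s
            = ∑ i ∈ J, (wdel j i - wJ i) * A i := by
          intro j hj
          rw [Finset.sum_congr rfl fun s _ => by
            rw [hddecomp j hj s, Finset.sum_mul]]
          rw [Finset.sum_comm]
          exact Finset.sum_congr rfl fun i _ => by
            rw [hAdef, Finset.mul_sum]
            exact Finset.sum_congr rfl fun s _ => by ring
        rw [step1]
        rw [Finset.sum_congr rfl fun j hj => by rw [step2 j hj, Finset.mul_sum]]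
        rw [Finset.sum_comm]
        apply Finset.sum_congr rfl
        intro i _
        have : bet i * A i = ∑ j ∈ J, (u j * (wdel j i - wJ i)) * A i := by
          rw [hbet]; dsimp only; rw [Finset.sum_mul]
        rw [this]
        exact Finset.sum_congr rfl fun j _ => by ring
      have hfinal : ∑ i ∈ J, bet i * A i ≤ 0 := by
        have e1 : ∑ i ∈ J, (bet i - r * wJ i) * A i = ∑ i ∈ J, bet i * A i := by
          rw [Finset.sum_congr rfl (fun i (_ : i ∈ J) =>
            show (bet i - r * wJ i) * A i = bet i * A i - r * (wJ i * A i) from by ring)]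
          rw [Finset.sum_sub_distrib, ← Finset.mul_sum, hA0, mul_zero, sub_zero]
        rw [← e1]
        apply Finset.sum_nonpos
        intro i hi
        by_cases hijm : i = jm
        · subst hijm
          have : bet i - r * wJ i = 0 := by
            rw [hr, div_mul_cancel₀ _ (ne_of_gt (hpos i hi))]
            ring
          rw [this, zero_mul]
        · apply mul_nonpos_of_nonpos_of_nonneg
          · have h := hmax i hi
            have hwi := hpos i hi
            rw [div_le_iff₀ hwi] at h
            have : bet i / wJ i * wJ i = bet i := div_mul_cancel₀ _ (ne_of_gt hwi)
            nlinarith [hmax i hi]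
          · exact hApos i hi hijm
      have := hpd jm hjm
      rw [hident] at this
      linarith
end

section
/- Model averaging for penalized synthetic control: let X ∈ ℝ^{T×N}, y ∈ ℝ^T, η > 0, and J ⊆ {1,…,N} with |J| ≥ 2. Let ŵ^J_η be the unique minimizer of ‖Xw − y‖² + η‖w‖² over the simplex 𝒲^J, and ŵ^{J∖{j}}_η the unique minimizer over 𝒲^{J∖{j}}. Then there exist λ_j ∈ [0,1] with Σ_{j∈J} λ_j = 1 such that ŵ^J_η = Σ_{j∈J} λ_j ŵ^{J∖{j}}_η. -/
open Matrix BigOperators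

/-- The ridge-penalized synthetic-control objective. -/
def penObj {T N : ℕ} (X : Matrix (Fin T) (Fin N) ℝ) (y : Fin T → ℝ) (η : ℝ)
    (w : Fin N → ℝ) : ℝ :=
  (∑ t, ((X *ᵥ w) t - y t) ^ 2) + η * ∑ i, (w i) ^ 2

namespace MAaux

variable {T N : ℕ} (X : Matrix (Fin T) (Fin N) ℝ) (y : Fin T → ℝ) (η : ℝ)

/-- bilinear form -/
def B (u v : Fin N → ℝ) : ℝ :=
  (∑ t, (X *ᵥ u) t * (X *ᵥ v) t) + η * ∑ i, u i * v i

/-- quadratic form -/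
def Q (d : Fin N → ℝ) : ℝ := B X η d d

/-- gradient-type form -/
def G (u d : Fin N → ℝ) : ℝ :=
  (∑ t, ((X *ᵥ u) t - y t) * (X *ᵥ d) t) + η * ∑ i, u i * d i

lemma B_symm (u v : Fin N → ℝ) : B X η u v = B X η v u := by
  unfold B; congr 1
  · exact Finset.sum_congr rfl fun t _ => mul_comm _ _
  · congr 1; exact Finset.sum_congr rfl fun i _ => mul_comm _ _

lemma B_sub_right (a u v : Fin N → ℝ) :
    B X η a (u - v) = B X η a u - B X η a v := by
  unfold B
  rw [Matrix.mulVec_sub]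
  simp only [Pi.sub_apply, mul_sub, Finset.sum_sub_distrib]
  ring

lemma B_smul_right (c : ℝ) (a u : Fin N → ℝ) :
    B X η a (c • u) = c * B X η a u := by
  unfold B
  rw [Matrix.mulVec_smul]
  simp only [Pi.smul_apply, smul_eq_mul]
  rw [show (∑ t, (X *ᵥ a) t * (c * (X *ᵥ u) t)) = c * ∑ t, (X *ᵥ a) t * (X *ᵥ u) t by
    rw [Finset.mul_sum]; exact Finset.sum_congr rfl fun t _ => by ring]
  rw [show (∑ i, a i * (c * u i)) = c * ∑ i, a i * u i by
    rw [Finset.mul_sum]; exact Finset.sum_congr rfl fun i _ => by ring]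
  ring

lemma G_sub_right (u d e : Fin N → ℝ) :
    G X y η u (d - e) = G X y η u d - G X y η u e := by
  unfold G
  rw [Matrix.mulVec_sub]
  simp only [Pi.sub_apply, mul_sub, Finset.sum_sub_distrib]
  ring

lemma G_smul_right (c : ℝ) (u d : Fin N → ℝ) :
    G X y η u (c • d) = c * G X y η u d := by
  unfold G
  rw [Matrix.mulVec_smul]
  simp only [Pi.smul_apply, smul_eq_mul]
  rw [show (∑ t, ((X *ᵥ u) t - y t) * (c * (X *ᵥ d) t))
      = c * ∑ t, ((X *ᵥ u) t - y t) * (X *ᵥ d) t by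
    rw [Finset.mul_sum]; exact Finset.sum_congr rfl fun t _ => by ring]
  rw [show (∑ i, u i * (c * d i)) = c * ∑ i, u i * d i by
    rw [Finset.mul_sum]; exact Finset.sum_congr rfl fun i _ => by ring]
  ring

lemma G_sub_B (u u' d : Fin N → ℝ) :
    G X y η u d - G X y η u' d = B X η (u - u') d := by
  unfold G B
  rw [Matrix.mulVec_sub]
  simp only [Pi.sub_apply, sub_mul, mul_sub, Finset.sum_sub_distrib]
  ring

lemma Q_nonneg (d : Fin N → ℝ) (hη : 0 < η) : 0 ≤ Q X η d := by
  unfold Q B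
  have h1 : (0:ℝ) ≤ ∑ t, (X *ᵥ d) t * (X *ᵥ d) t :=
    Finset.sum_nonneg fun t _ => mul_self_nonneg _
  have h2 : (0:ℝ) ≤ ∑ i, d i * d i :=
    Finset.sum_nonneg fun i _ => mul_self_nonneg _
  nlinarith

lemma Q_pos (d : Fin N → ℝ) (hη : 0 < η) (hd : d ≠ 0) : 0 < Q X η d := by
  unfold Q B
  have h1 : (0:ℝ) ≤ ∑ t, (X *ᵥ d) t * (X *ᵥ d) t :=
    Finset.sum_nonneg fun t _ => mul_self_nonneg _
  obtain ⟨i, hi⟩ : ∃ i, d i ≠ 0 := by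
    by_contra h; push_neg at h; exact hd (funext h)
  have h2 : (0:ℝ) < ∑ i, d i * d i :=
    Finset.sum_pos' (fun i _ => mul_self_nonneg _)
      ⟨i, Finset.mem_univ i, mul_self_pos.mpr hi⟩
  nlinarith

lemma penObj_expand (u d : Fin N → ℝ) (c : ℝ) :
    penObj X y η (u + c • d)
      = penObj X y η u + 2 * c * G X y η u d + c ^ 2 * Q X η d := by
  unfold penObj G Q B
  rw [Matrix.mulVec_add, Matrix.mulVec_smul]
  simp only [Pi.add_apply, Pi.smul_apply, smul_eq_mul]
  rw [show (∑ t, ((X *ᵥ u) t + c * (X *ᵥ d) t - y t) ^ 2)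
      = ∑ t, (((X *ᵥ u) t - y t) ^ 2 + 2 * c * (((X *ᵥ u) t - y t) * (X *ᵥ d) t)
          + c ^ 2 * ((X *ᵥ d) t * (X *ᵥ d) t)) from
    Finset.sum_congr rfl fun t _ => by ring]
  rw [show (∑ i, (u i + c * d i) ^ 2)
      = ∑ i, ((u i) ^ 2 + 2 * c * (u i * d i) + c ^ 2 * (d i * d i)) from
    Finset.sum_congr rfl fun i _ => by ring]
  simp only [Finset.sum_add_distrib, ← Finset.mul_sum]
  ring

lemma Q_expand (a b : Fin N → ℝ) (t : ℝ) :
    Q X η (a + t • b) = Q X η a + 2 * t * B X η a b + t ^ 2 * Q X η b := by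
  unfold Q B
  rw [Matrix.mulVec_add, Matrix.mulVec_smul]
  simp only [Pi.add_apply, Pi.smul_apply, smul_eq_mul]
  rw [show (∑ s, ((X *ᵥ a) s + t * (X *ᵥ b) s) * ((X *ᵥ a) s + t * (X *ᵥ b) s))
      = ∑ s, ((X *ᵥ a) s * (X *ᵥ a) s + 2 * t * ((X *ᵥ a) s * (X *ᵥ b) s)
          + t ^ 2 * ((X *ᵥ b) s * (X *ᵥ b) s)) from
    Finset.sum_congr rfl fun s _ => by ring]
  rw [show (∑ i, (a i + t * b i) * (a i + t * b i))
      = ∑ i, (a i * a i + 2 * t * (a i * b i) + t ^ 2 * (b i * b i)) from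
    Finset.sum_congr rfl fun i _ => by ring]
  simp only [Finset.sum_add_distrib, ← Finset.mul_sum]
  ring

lemma key_pos (a q : ℝ) (hq : 0 ≤ q)
    (h : ∀ t : ℝ, 0 < t → t ≤ 1 → 0 ≤ 2 * t * a + t ^ 2 * q) : 0 ≤ a := by
  by_contra ha
  push_neg at ha
  set t := min 1 ((-a) / (q + 1)) with ht
  have hq1 : (0:ℝ) < q + 1 := by linarith
  have htpos : 0 < t := lt_min one_pos (div_pos (by linarith) hq1)
  have ht1 : t ≤ 1 := min_le_left _ _
  have h2 : t * (q + 1) ≤ -a := by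
    have := min_le_right 1 ((-a) / (q + 1))
    calc t * (q + 1) ≤ ((-a) / (q + 1)) * (q + 1) := by nlinarith
    _ = -a := div_mul_cancel₀ _ (ne_of_gt hq1)
  have := h t htpos ht1
  nlinarith


lemma simplexW_convex {N : ℕ} (J : Finset (Fin N)) : Convex ℝ (simplexW J) := by
  intro w1 hw1 w2 hw2 a b ha hb hab
  obtain ⟨h1I, h1s, h1z⟩ := hw1
  obtain ⟨h2I, h2s, h2z⟩ := hw2
  refine ⟨fun i => ?_, ?_, fun j hj => ?_⟩
  · constructor
    · have := (h1I i).1; have := (h2I i).1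
      simp only [Pi.add_apply, Pi.smul_apply, smul_eq_mul]
      nlinarith
    · have := (h1I i).2; have := (h2I i).2
      simp only [Pi.add_apply, Pi.smul_apply, smul_eq_mul]
      nlinarith
  · simp only [Pi.add_apply, Pi.smul_apply, smul_eq_mul]
    rw [Finset.sum_add_distrib, ← Finset.mul_sum, ← Finset.mul_sum, h1s, h2s]
    linarith
  · simp only [Pi.add_apply, Pi.smul_apply, smul_eq_mul, h1z j hj, h2z j hj]
    ring

lemma simplexW_subset {N : ℕ} {S S' : Finset (Fin N)} (h : S ⊆ S') :
    simplexW S ⊆ simplexW S' := by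
  rintro w ⟨hI, hs, hz⟩
  exact ⟨hI, hs, fun j hj => hz j (fun hmem => hj (h hmem))⟩

lemma simplexW_compact {N : ℕ} (J : Finset (Fin N)) : IsCompact (simplexW J) := by
  have hsub : simplexW J ⊆ Set.Icc (0 : Fin N → ℝ) 1 := by
    rintro w ⟨hI, -, -⟩
    exact ⟨fun i => (hI i).1, fun i => (hI i).2⟩
  have hclosed : IsClosed (simplexW J) := by
    have hA : IsClosed {w : Fin N → ℝ | ∀ i, w i ∈ Set.Icc (0:ℝ) 1} := by
      rw [Set.setOf_forall]
      exact isClosed_iInter fun i => IsClosed.preimage (continuous_apply i) isClosed_Icc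
    have hB : IsClosed {w : Fin N → ℝ | (∑ i, w i) = 1} :=
      isClosed_eq (continuous_finset_sum _ fun i _ => continuous_apply i) continuous_const
    have hC : IsClosed {w : Fin N → ℝ | ∀ j ∉ J, w j = 0} := by
      rw [Set.setOf_forall]
      refine isClosed_iInter fun j => ?_
      rcases Decidable.em (j ∈ J) with hj | hj
      · simp [hj]
      · have : {w : Fin N → ℝ | j ∉ J → w j = 0} = {w | w j = 0} := by
          ext w; simp [hj]
        rw [this]
        exact isClosed_eq (continuous_apply j) continuous_const
    have : simplexW J
        = {w : Fin N → ℝ | ∀ i, w i ∈ Set.Icc (0:ℝ) 1}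
          ∩ ({w | (∑ i, w i) = 1} ∩ {w | ∀ j ∉ J, w j = 0}) := by
      ext w; simp [simplexW, and_assoc]
    rw [this]
    exact hA.inter (hB.inter hC)
  exact (isCompact_Icc).of_isClosed_subset hclosed hsub

lemma coord_le_one {N : ℕ} {w : Fin N → ℝ} (h0 : ∀ i, 0 ≤ w i)
    (hs : (∑ i, w i) = 1) (k : Fin N) : w k ≤ 1 := by
  calc w k ≤ ∑ i, w i := Finset.single_le_sum (fun i _ => h0 i) (Finset.mem_univ k)
  _ = 1 := hs

/-- first-order condition at a minimizer over a convex set -/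
lemma first_order {T N : ℕ} (X : Matrix (Fin T) (Fin N) ℝ) (y : Fin T → ℝ)
    {η : ℝ} (hη : 0 < η) {K : Set (Fin N → ℝ)} (hK : Convex ℝ K)
    {u : Fin N → ℝ} (hu : u ∈ K)
    (hmin : ∀ w ∈ K, penObj X y η u ≤ penObj X y η w) :
    ∀ w ∈ K, 0 ≤ G X y η u (w - u) := by
  intro w hw
  refine key_pos _ _ (Q_nonneg X η (w - u) hη) fun t ht0 ht1 => ?_
  have hmem : u + t • (w - u) ∈ K := by
    have := hK hu hw (by linarith : (0:ℝ) ≤ 1 - t) (le_of_lt ht0) (by ring)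
    have heq : (1 - t) • u + t • w = u + t • (w - u) := by
      funext i
      simp only [Pi.add_apply, Pi.smul_apply, Pi.sub_apply, smul_eq_mul]
      ring
    rwa [heq] at this
  have := hmin _ hmem
  rw [penObj_expand] at this
  linarith

/-- uniqueness of minimizers -/
lemma min_unique {T N : ℕ} (X : Matrix (Fin T) (Fin N) ℝ) (y : Fin T → ℝ)
    {η : ℝ} (hη : 0 < η) {K : Set (Fin N → ℝ)}
    {u w : Fin N → ℝ} (hu : u ∈ K) (hw : w ∈ K) (hK : Convex ℝ K)
    (hmu : ∀ v ∈ K, penObj X y η u ≤ penObj X y η v)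
    (hmw : ∀ v ∈ K, penObj X y η w ≤ penObj X y η v) : u = w := by
  by_contra hne
  have hd : w - u ≠ 0 := sub_ne_zero.mpr (Ne.symm hne)
  have hQ : 0 < Q X η (w - u) := Q_pos X η _ hη hd
  have hmem : u + (1/2 : ℝ) • (w - u) ∈ K := by
    have := hK hu hw (by norm_num : (0:ℝ) ≤ 1/2) (by norm_num : (0:ℝ) ≤ 1/2) (by norm_num)
    have heq : (1/2 : ℝ) • u + (1/2 : ℝ) • w = u + (1/2 : ℝ) • (w - u) := by
      funext i
      simp only [Pi.add_apply, Pi.smul_apply, Pi.sub_apply, smul_eq_mul]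
      ring
    rwa [heq] at this
  have h1 : penObj X y η (u + (1:ℝ) • (w - u))
      = penObj X y η u + 2 * 1 * G X y η u (w - u) + 1 ^ 2 * Q X η (w - u) :=
    penObj_expand X y η u (w - u) 1
  have heqw : u + (1:ℝ) • (w - u) = w := by
    funext i; simp only [Pi.add_apply, Pi.smul_apply, Pi.sub_apply, smul_eq_mul]; ring
  rw [heqw] at h1
  have h2 := penObj_expand X y η u (w - u) (1/2)
  have huw : penObj X y η u = penObj X y η w :=
    le_antisymm (hmu w hw) (hmw u hu)
  have h3 := hmu _ hmem
  rw [h2] at h3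
  -- from h1: G = (penObj w - penObj u - Q)/2 = -Q/2
  nlinarith


lemma B_zero_right {T N : ℕ} (X : Matrix (Fin T) (Fin N) ℝ) (η : ℝ) (a : Fin N → ℝ) :
    B X η a (0 : Fin N → ℝ) = 0 := by
  unfold B
  simp [Matrix.mulVec_zero]

lemma indicator_mem {N : ℕ} {J : Finset (Fin N)} {j : Fin N} (hj : j ∈ J) :
    (fun k => if k = j then (1:ℝ) else 0) ∈ simplexW J := by
  refine ⟨fun i => ?_, ?_, fun i hi => ?_⟩
  · by_cases h : i = j <;> simp [h]
  · simp [Finset.sum_ite_eq']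
  · have : i ≠ j := fun h => hi (h ▸ hj)
    simp [this]

lemma indicator_sum {N : ℕ} {J : Finset (Fin N)} {j : Fin N} (hj : j ∈ J)
    (g : Fin N → Fin N → ℝ) :
    (∑ k ∈ J, (if k = j then (1:ℝ) else 0) • g k) = g j := by
  rw [show (∑ k ∈ J, (if k = j then (1:ℝ) else 0) • g k)
      = ∑ k ∈ J, (if k = j then g k else 0) from Finset.sum_congr rfl fun k _ => by
    split_ifs <;> simp]
  rw [Finset.sum_ite_eq' J j g]
  simp [hj]

end MAaux


/-- Model averaging for penalized synthetic control: the penalized solution on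
donor set `J` is a convex combination of the penalized leave-one-out
solutions. -/
theorem penalized_synth_model_averaging {T N : ℕ}
    (X : Matrix (Fin T) (Fin N) ℝ) (y : Fin T → ℝ) (η : ℝ) (hη : 0 < η)
    (J : Finset (Fin N)) (hJ : 2 ≤ J.card)
    (wJ : Fin N → ℝ) (hwJ : wJ ∈ simplexW J)
    (hwJmin : ∀ w ∈ simplexW J, penObj X y η wJ ≤ penObj X y η w)
    (wdel : Fin N → (Fin N → ℝ))
    (hwdel : ∀ j ∈ J, wdel j ∈ simplexW (J.erase j))
    (hwdelmin : ∀ j ∈ J, ∀ w ∈ simplexW (J.erase j),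
      penObj X y η (wdel j) ≤ penObj X y η w) :
    ∃ lam : Fin N → ℝ,
      (∀ j ∈ J, lam j ∈ Set.Icc (0 : ℝ) 1) ∧
      (∑ j ∈ J, lam j = 1) ∧
      wJ = ∑ j ∈ J, lam j • wdel j := by

  classical
  open MAaux in
  have hJne : J.Nonempty := Finset.card_pos.mp (by omega)
  by_cases hpos : ∀ j ∈ J, wJ j ≠ 0
  · -- interior case
    have hwpos : ∀ j ∈ J, 0 < wJ j :=
      fun j hj => lt_of_le_of_ne (hwJ.1 j).1 (Ne.symm (hpos j hj))
    set Φ : (Fin N → ℝ) → (Fin N → ℝ) := fun lam => ∑ j ∈ J, lam j • wdel j with hΦ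
    set C : Set (Fin N → ℝ) := Φ '' simplexW J with hC
    have hmapadd : ∀ a b, Φ (a + b) = Φ a + Φ b := fun a b => by
      simp only [hΦ, Pi.add_apply, add_smul, Finset.sum_add_distrib]
    have hmapsmul : ∀ (c : ℝ) a, Φ (c • a) = c • Φ a := fun c a => by
      simp only [hΦ, Pi.smul_apply, smul_eq_mul, ← smul_smul, ← Finset.smul_sum]
    have hCconv : Convex ℝ C := (simplexW_convex J).is_linear_image ⟨hmapadd, hmapsmul⟩
    have hcontΦ : Continuous Φ :=
      continuous_finset_sum _ fun j _ => (continuous_apply j).smul continuous_const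
    have hCcompact : IsCompact C := (simplexW_compact J).image hcontΦ
    have hdelC : ∀ j ∈ J, wdel j ∈ C := fun j hj =>
      ⟨fun k => if k = j then (1:ℝ) else 0, indicator_mem hj, indicator_sum hj wdel⟩
    have hCne : C.Nonempty := ⟨wdel hJne.choose, hdelC _ hJne.choose_spec⟩
    have hCsum : ∀ c ∈ C, (∑ i, c i) = 1 ∧ ∀ i ∉ J, c i = 0 := by
      rintro c ⟨lam, hlam, rfl⟩
      constructor
      · have h1 : (∑ i, (∑ j ∈ J, lam j • wdel j) i) = ∑ j ∈ J, ∑ i, lam j * wdel j i := by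
          simp only [Finset.sum_apply, Pi.smul_apply, smul_eq_mul]
          exact Finset.sum_comm
        rw [hΦ, h1]
        have h2 : ∀ j ∈ J, (∑ i, lam j * wdel j i) = lam j := fun j hj => by
          rw [← Finset.mul_sum, (hwdel j hj).2.1, mul_one]
        rw [Finset.sum_congr rfl h2]
        rw [← hlam.2.1]
        exact Finset.sum_subset (Finset.subset_univ J) (fun x _ hx => hlam.2.2 x hx)
      · intro i hi
        simp only [hΦ, Finset.sum_apply, Pi.smul_apply, smul_eq_mul]
        exact Finset.sum_eq_zero fun j hj => by
          rw [(hwdel j hj).2.2 i (fun hmem => hi (Finset.mem_of_mem_erase hmem)), mul_zero]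
    have hmv : ∀ t : Fin T, Continuous fun c : Fin N → ℝ => (X *ᵥ (c - wJ)) t := by
      intro t
      simp only [Matrix.mulVec, dotProduct, Pi.sub_apply]
      exact continuous_finset_sum _ fun i _ =>
        continuous_const.mul ((continuous_apply i).sub continuous_const)
    have hcont2 : Continuous (fun c : Fin N → ℝ => Q X η (c - wJ)) := by
      have hQdef : (fun c : Fin N → ℝ => Q X η (c - wJ))
          = fun c => (∑ t, (X *ᵥ (c - wJ)) t * (X *ᵥ (c - wJ)) t)
              + η * ∑ i, (c i - wJ i) * (c i - wJ i) := rfl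
      rw [hQdef]
      refine Continuous.add (continuous_finset_sum _ fun t _ => (hmv t).mul (hmv t))
        (continuous_const.mul (continuous_finset_sum _ fun i _ => ?_))
      exact ((continuous_apply i).sub continuous_const).mul
        ((continuous_apply i).sub continuous_const)
    obtain ⟨cstar, hcstarC, hcmin⟩ :=
      hCcompact.exists_isMinOn hCne hcont2.continuousOn
    have hcmin' : ∀ c ∈ C, Q X η (cstar - wJ) ≤ Q X η (c - wJ) :=
      fun c hc => hcmin hc
    have hwJC : wJ ∈ C := by
      by_contra hnot
      set v : Fin N → ℝ := cstar - wJ with hv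
      have hvne : v ≠ 0 := fun h => hnot (sub_eq_zero.mp h ▸ hcstarC)
      have hQv : 0 < Q X η v := Q_pos X η v hη hvne
      have hvar : ∀ c ∈ C, 0 ≤ B X η v (c - cstar) := by
        intro c hc
        refine key_pos _ _ (Q_nonneg X η (c - cstar) hη) fun t ht0 ht1 => ?_
        have hmem : cstar + t • (c - cstar) ∈ C := by
          have h := hCconv hcstarC hc (by linarith : (0:ℝ) ≤ 1 - t) (le_of_lt ht0) (by ring)
          have heq : (1 - t) • cstar + t • c = cstar + t • (c - cstar) := by
            funext i
            simp only [Pi.add_apply, Pi.smul_apply, Pi.sub_apply, smul_eq_mul]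
            ring
          rwa [heq] at h
        have h := hcmin' _ hmem
        rw [show cstar + t • (c - cstar) - wJ = v + t • (c - cstar) from by
          funext i
          simp only [hv, Pi.add_apply, Pi.smul_apply, Pi.sub_apply, smul_eq_mul]
          ring] at h
        rw [Q_expand] at h
        have : Q X η (cstar - wJ) = Q X η v := by rw [hv]
        linarith [h, this]
      have hvsum : (∑ i, v i) = 0 := by
        have hcs := (hCsum cstar hcstarC).1
        simp only [hv, Pi.sub_apply, Finset.sum_sub_distrib, hcs, hwJ.2.1]
        ring
      have hvz : ∀ i ∉ J, v i = 0 := fun i hi => by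
        simp [hv, (hCsum cstar hcstarC).2 i hi, hwJ.2.2 i hi]
      have hex : ∃ k ∈ J, 0 < v k := by
        by_contra h
        push_neg at h
        obtain ⟨i0, hi0⟩ : ∃ i, v i ≠ 0 := by
          by_contra hh; push_neg at hh; exact hvne (funext hh)
        have hi0J : i0 ∈ J := by
          by_contra hj; exact hi0 (hvz i0 hj)
        have hvle : ∀ i, v i ≤ 0 := fun i => by
          by_cases hij : i ∈ J
          · exact h i hij
          · simp [hvz i hij]
        have hlt : (∑ i, v i) < ∑ _i : Fin N, (0:ℝ) :=
          Finset.sum_lt_sum (fun i _ => hvle i)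
            ⟨i0, Finset.mem_univ i0, lt_of_le_of_ne (hvle i0) hi0⟩
        simp only [Finset.sum_const_zero] at hlt
        linarith
      set S := J.filter (fun i => 0 < v i) with hS
      have hSne : S.Nonempty := by
        obtain ⟨k, hk, hvk⟩ := hex
        exact ⟨k, Finset.mem_filter.mpr ⟨hk, hvk⟩⟩
      set tstar := S.inf' hSne (fun i => wJ i / v i) with ht
      obtain ⟨j0, hj0S, hj0eq⟩ := Finset.exists_mem_eq_inf' hSne (fun i => wJ i / v i)
      have hj0J : j0 ∈ J := (Finset.mem_filter.mp hj0S).1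
      have hvj0 : 0 < v j0 := (Finset.mem_filter.mp hj0S).2
      have htpos : 0 < tstar := by
        rw [ht, Finset.lt_inf'_iff]
        intro i hi
        exact div_pos (hwpos i (Finset.mem_filter.mp hi).1) (Finset.mem_filter.mp hi).2
      set wstar : Fin N → ℝ := wJ - tstar • v with hwst
      have hwstar0 : ∀ i, 0 ≤ wstar i := by
        intro i
        simp only [hwst, Pi.sub_apply, Pi.smul_apply, smul_eq_mul]
        by_cases hvi : 0 < v i
        · have hiJ : i ∈ J := by
            by_contra hj; rw [hvz i hj] at hvi; exact lt_irrefl 0 hvi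
          have hle : tstar ≤ wJ i / v i :=
            Finset.inf'_le _ (Finset.mem_filter.mpr ⟨hiJ, hvi⟩)
          have := (le_div_iff₀ hvi).mp hle
          linarith
        · push_neg at hvi
          have := (hwJ.1 i).1
          nlinarith
      have hwstarsum : (∑ i, wstar i) = 1 := by
        simp only [hwst, Pi.sub_apply, Pi.smul_apply, smul_eq_mul,
          Finset.sum_sub_distrib, ← Finset.mul_sum, hvsum, hwJ.2.1]
        ring
      have hwstarj0 : wstar j0 = 0 := by
        simp only [hwst, Pi.sub_apply, Pi.smul_apply, smul_eq_mul]
        rw [ht, hj0eq, div_mul_cancel₀ _ (ne_of_gt hvj0)]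
        ring
      have hwstarmem : wstar ∈ simplexW (J.erase j0) := by
        refine ⟨fun i => ⟨hwstar0 i, coord_le_one hwstar0 hwstarsum i⟩, hwstarsum,
          fun i hi => ?_⟩
        by_cases hiJ : i ∈ J
        · have hieq : i = j0 := by
            by_contra hne'; exact hi (Finset.mem_erase.mpr ⟨hne', hiJ⟩)
          rw [hieq]; exact hwstarj0
        · simp only [hwst, Pi.sub_apply, Pi.smul_apply, smul_eq_mul,
            hvz i hiJ, hwJ.2.2 i hiJ]
          ring
      have hFOdel := first_order X y hη (simplexW_convex (J.erase j0)) (hwdel j0 hj0J)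
        (hwdelmin j0 hj0J) wstar hwstarmem
      have hFOweak := first_order X y hη (simplexW_convex J) hwJ hwJmin
      have hFOeq : ∀ w ∈ simplexW J, G X y η wJ (w - wJ) = 0 := by
        intro w hw
        set ε := J.inf' hJne wJ with hε
        have hεpos : 0 < ε := by
          rw [hε, Finset.lt_inf'_iff]; exact fun i hi => hwpos i hi
        have hεle : ∀ i ∈ J, ε ≤ wJ i := fun i hi => Finset.inf'_le _ hi
        have hmem : wJ + (-ε) • (w - wJ) ∈ simplexW J := by
          have h0 : ∀ i, 0 ≤ (wJ + (-ε) • (w - wJ)) i := by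
            intro i
            simp only [Pi.add_apply, Pi.smul_apply, Pi.sub_apply, smul_eq_mul]
            by_cases hiJ : i ∈ J
            · have h1 := hεle i hiJ
              have h2 := (hw.1 i).2
              have h3 := (hw.1 i).1
              have h4 := (hwJ.1 i).1
              nlinarith
            · simp [hwJ.2.2 i hiJ, hw.2.2 i hiJ]
          have hsum : (∑ i, (wJ + (-ε) • (w - wJ)) i) = 1 := by
            simp only [Pi.add_apply, Pi.smul_apply, Pi.sub_apply, smul_eq_mul]
            rw [Finset.sum_add_distrib, ← Finset.mul_sum]
            rw [show (∑ i, (w i - wJ i)) = (∑ i, w i) - ∑ i, wJ i from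
              Finset.sum_sub_distrib _ _]
            rw [hwJ.2.1, hw.2.1]
            ring
          exact ⟨fun i => ⟨h0 i, coord_le_one h0 hsum i⟩, hsum, fun i hi => by
            simp only [Pi.add_apply, Pi.smul_apply, Pi.sub_apply, smul_eq_mul,
              hwJ.2.2 i hi, hw.2.2 i hi]
            ring⟩
        have h1 := hFOweak w hw
        have h2 := hFOweak _ hmem
        rw [show wJ + (-ε) • (w - wJ) - wJ = (-ε) • (w - wJ) from by
          funext i
          simp only [Pi.add_apply, Pi.smul_apply, Pi.sub_apply, smul_eq_mul]
          ring, G_smul_right] at h2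
        nlinarith
      have hwdelJ : wdel j0 ∈ simplexW J :=
        simplexW_subset (Finset.erase_subset j0 J) (hwdel j0 hj0J)
      have hwstarJ : wstar ∈ simplexW J :=
        simplexW_subset (Finset.erase_subset j0 J) hwstarmem
      set p : Fin N → ℝ := wdel j0 - wJ with hp
      have hG1 : G X y η wJ (wstar - wdel j0) = 0 := by
        have e1 := hFOeq wstar hwstarJ
        have e2 := hFOeq (wdel j0) hwdelJ
        have e3 := G_sub_right X y η wJ (wstar - wJ) (wdel j0 - wJ)
        rw [show wstar - wJ - (wdel j0 - wJ) = wstar - wdel j0 from by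
          funext i; simp only [Pi.sub_apply]; ring] at e3
        rw [e3, e1, e2]; ring
      have hBpd : 0 ≤ B X η p (wstar - wdel j0) := by
        have e := G_sub_B X y η (wdel j0) wJ (wstar - wdel j0)
        rw [hG1] at e
        rw [← hp] at e
        linarith [hFOdel, e.symm.le, e.le]
      have hexp : B X η p (wstar - wdel j0) = -(B X η p p) - tstar * B X η p v := by
        rw [show wstar - wdel j0 = ((0:Fin N → ℝ) - p) - tstar • v from by
          funext i
          simp only [hwst, hp, Pi.sub_apply, Pi.smul_apply, Pi.zero_apply, smul_eq_mul]
          ring]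
        rw [B_sub_right, B_sub_right, B_smul_right, B_zero_right]
        ring
      have h5 := hvar (wdel j0) (hdelC j0 hj0J)
      have h6 : B X η v (wdel j0 - cstar) = B X η v p - Q X η v := by
        rw [show wdel j0 - cstar = p - v from by
          funext i
          simp only [hp, hv, Pi.sub_apply]
          ring]
        rw [B_sub_right]
        rfl
      have hsymm := B_symm X η p v
      have hBpp : 0 ≤ B X η p p := Q_nonneg X η p hη
      rw [h6] at h5
      nlinarith
    obtain ⟨lam, hlamS, hlameq⟩ := hwJC
    refine ⟨lam, fun j _ => hlamS.1 j, ?_, hlameq.symm⟩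
    rw [← hlamS.2.1]
    exact Finset.sum_subset (Finset.subset_univ J) (fun x _ hx => hlamS.2.2 x hx)
  · -- boundary case
    push_neg at hpos
    obtain ⟨j, hjJ, hj0⟩ := hpos
    have hwJ' : wJ ∈ simplexW (J.erase j) := by
      refine ⟨hwJ.1, hwJ.2.1, fun i hi => ?_⟩
      by_cases hiJ : i ∈ J
      · have : i = j := by
          by_contra hne'; exact hi (Finset.mem_erase.mpr ⟨hne', hiJ⟩)
        rw [this]; exact hj0
      · exact hwJ.2.2 i hiJ
    have hsub := simplexW_subset (Finset.erase_subset j J)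
    have heq : wJ = wdel j :=
      min_unique X y hη hwJ' (hwdel j hjJ) (simplexW_convex _)
        (fun v hv => hwJmin v (hsub hv)) (hwdelmin j hjJ)
    refine ⟨fun k => if k = j then 1 else 0, fun k _ => ?_, ?_, ?_⟩
    · by_cases h : k = j <;> simp [h]
    · rw [Finset.sum_ite_eq' J j (fun _ => (1:ℝ))]
      simp [hjJ]
    · rw [indicator_sum hjJ wdel]
      exact heq
end

section
/- Limit of ridge-penalized simplex least squares is the minimum-norm simplex least-squares solution: let X ∈ ℝ^{T×N}, y ∈ ℝ^T, and 𝒲 the standard simplex in ℝ^N. For η > 0 let w_η = argmin_{w∈𝒲} ‖Xw − y‖² + η‖w‖², and let w* = argmin_{w ∈ 𝒲̂} ‖w‖ where 𝒲̂ = argmin_{w∈𝒲} ‖Xw − y‖². Then w_η → w* as η → 0⁺. -/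
open Matrix BigOperators Filter Topology

/-- The standard simplex in `ℝ^N`. -/
def stdSimplex' (N : ℕ) : Set (Fin N → ℝ) :=
  {w | (∀ i, w i ∈ Set.Icc (0 : ℝ) 1) ∧ (∑ i, w i) = 1}

lemma stdSimplex'_eq (N : ℕ) : stdSimplex' N = stdSimplex ℝ (Fin N) := by
  ext w
  constructor
  · rintro ⟨h1, h2⟩
    exact ⟨fun i => (h1 i).1, h2⟩
  · rintro ⟨h1, h2⟩
    refine ⟨fun i => ⟨h1 i, ?_⟩, h2⟩
    calc w i ≤ ∑ j, w j := Finset.single_le_sum (fun j _ => h1 j) (Finset.mem_univ i)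
    _ = 1 := h2

lemma midpoint_mem {N : ℕ} {v w : Fin N → ℝ} (hv : v ∈ stdSimplex' N)
    (hw : w ∈ stdSimplex' N) : (fun i => (v i + w i) / 2) ∈ stdSimplex' N := by
  obtain ⟨hv1, hv2⟩ := hv
  obtain ⟨hw1, hw2⟩ := hw
  refine ⟨fun i => ⟨?_, ?_⟩, ?_⟩
  · have := (hv1 i).1; have := (hw1 i).1; linarith
  · have := (hv1 i).2; have := (hw1 i).2; linarith
  · have : ∑ i, (v i + w i) / 2 = (∑ i, v i + ∑ i, w i) / 2 := by
      rw [← Finset.sum_add_distrib, Finset.sum_div]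
    rw [this, hv2, hw2]; norm_num

/-- As the ridge penalty vanishes, the penalized simplex least-squares solutions
converge to the minimum-norm element of the set of simplex least-squares
minimizers. -/
theorem ridge_limit_min_norm {T N : ℕ}
    (X : Matrix (Fin T) (Fin N) ℝ) (y : Fin T → ℝ)
    (wfun : ℝ → (Fin N → ℝ))
    (hwmem : ∀ η > (0 : ℝ), wfun η ∈ stdSimplex' N)
    (hwmin : ∀ η > (0 : ℝ), ∀ w ∈ stdSimplex' N, penObj X y η (wfun η) ≤ penObj X y η w)
    (wstar : Fin N → ℝ) (hstarmem : wstar ∈ stdSimplex' N)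
    (hstarmin : ∀ w ∈ stdSimplex' N,
      ∑ t, ((X *ᵥ wstar) t - y t) ^ 2 ≤ ∑ t, ((X *ᵥ w) t - y t) ^ 2)
    (hstarnorm : ∀ w ∈ stdSimplex' N,
      (∀ w' ∈ stdSimplex' N,
        ∑ t, ((X *ᵥ w) t - y t) ^ 2 ≤ ∑ t, ((X *ᵥ w') t - y t) ^ 2) →
      ∑ i, (wstar i) ^ 2 ≤ ∑ i, (w i) ^ 2) :
    Tendsto wfun (nhdsWithin 0 (Set.Ioi 0)) (nhds wstar) := by
  classical
  set f : (Fin N → ℝ) → ℝ := fun v => ∑ t, ((X *ᵥ v) t - y t) ^ 2 with hfdef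
  set h : (Fin N → ℝ) → ℝ := fun v => ∑ i, (v i) ^ 2 with hhdef
  have hcont_f : Continuous f := by
    have : f = fun v => ∑ t, ((∑ j, X t j * v j) - y t) ^ 2 := by
      funext v; simp [hfdef, Matrix.mulVec, dotProduct]
    rw [this]; fun_prop
  have hcont_h : Continuous h := by fun_prop
  have hh_nonneg : ∀ v, 0 ≤ h v := fun v =>
    Finset.sum_nonneg fun i _ => sq_nonneg _
  -- key bounds
  have hkey : ∀ η > (0 : ℝ), h (wfun η) ≤ h wstar ∧ f (wfun η) ≤ f wstar + η * h wstar := by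
    intro η hη
    have h1 := hwmin η hη wstar hstarmem
    have h2 := hstarmin (wfun η) (hwmem η hη)
    simp only [penObj] at h1
    have hb : h (wfun η) ≤ h wstar := by
      have : η * h (wfun η) ≤ η * h wstar := by
        simp only [hfdef, hhdef] at *; linarith
      exact le_of_mul_le_mul_left this hη
    refine ⟨hb, ?_⟩
    have : η * h (wfun η) ≥ 0 := mul_nonneg hη.le (hh_nonneg _)
    simp only [hfdef, hhdef] at *; linarith
  have hcpt : IsCompact (stdSimplex' N) := by
    rw [stdSimplex'_eq]; exact isCompact_stdSimplex _ _
  apply hcpt.tendsto_nhds_of_unique_mapClusterPt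
  · filter_upwards [self_mem_nhdsWithin] with η hη
    exact hwmem η hη
  intro w hwS hcl
  have hcl' : ClusterPt w (Filter.map wfun (nhdsWithin 0 (Set.Ioi 0))) := hcl
  have hmemcl := clusterPt_iff_forall_mem_closure.mp hcl'
  -- h w ≤ h wstar
  have hw_le : h w ≤ h wstar := by
    have hclosed : IsClosed {v : Fin N → ℝ | h v ≤ h wstar} :=
      isClosed_le hcont_h continuous_const
    have hmem : {v : Fin N → ℝ | h v ≤ h wstar} ∈ Filter.map wfun (nhdsWithin 0 (Set.Ioi 0)) := by
      rw [Filter.mem_map]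
      filter_upwards [self_mem_nhdsWithin] with η hη
      exact (hkey η hη).1
    have := hmemcl _ hmem
    rwa [hclosed.closure_eq] at this
  -- f w ≤ f wstar
  have hf_le : f w ≤ f wstar := by
    by_contra hlt
    push_neg at hlt
    set ε := (f w - f wstar) / 2 with hεdef
    have hε : 0 < ε := by simp only [hεdef]; linarith
    have hclosed : IsClosed {v : Fin N → ℝ | f v ≤ f wstar + ε} :=
      isClosed_le hcont_f continuous_const
    have hmem : {v : Fin N → ℝ | f v ≤ f wstar + ε} ∈
        Filter.map wfun (nhdsWithin 0 (Set.Ioi 0)) := by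
      rw [Filter.mem_map]
      have hδ : 0 < ε / (h wstar + 1) := div_pos hε (by have := hh_nonneg wstar; linarith)
      filter_upwards [Ioo_mem_nhdsGT_of_mem
        (Set.mem_Ico.mpr ⟨le_refl (0:ℝ), hδ⟩)] with η hη
      obtain ⟨hη0, hηδ⟩ := hη
      have hkey2 := (hkey η hη0).2
      have : η * h wstar ≤ ε := by
        have hc : 0 ≤ h wstar := hh_nonneg wstar
        have : η * (h wstar + 1) ≤ ε := by
          rw [← le_div_iff₀ (by linarith)]
          exact hηδ.le
        nlinarith
      show f (wfun η) ≤ f wstar + ε; linarith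
    have := hmemcl _ hmem
    rw [hclosed.closure_eq] at this
    simp only [Set.mem_setOf_eq, hεdef] at this
    linarith
  -- w is a least-squares minimizer
  have hwmin' : ∀ w' ∈ stdSimplex' N, f w ≤ f w' :=
    fun w' hw' => le_trans hf_le (hstarmin w' hw')
  have hnorm_ge : h wstar ≤ h w := hstarnorm w hwS hwmin'
  have hnorm_eq : h w = h wstar := le_antisymm hw_le hnorm_ge
  -- midpoint argument
  set m : Fin N → ℝ := fun i => (w i + wstar i) / 2 with hmdef
  have hmS : m ∈ stdSimplex' N := midpoint_mem hwS hstarmem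
  have hfm : f m ≤ f wstar := by
    have hXm : ∀ t, (X *ᵥ m) t = ((X *ᵥ w) t + (X *ᵥ wstar) t) / 2 := by
      intro t
      simp only [hmdef, Matrix.mulVec, dotProduct]
      rw [← Finset.sum_add_distrib, Finset.sum_div]
      congr 1; funext j; ring
    have hfw : f w = f wstar := le_antisymm hf_le (hstarmin w hwS)
    have : f m ≤ (f w + f wstar) / 2 := by
      simp only [hfdef]
      rw [← Finset.sum_add_distrib, Finset.sum_div]
      apply Finset.sum_le_sum
      intro t _
      rw [hXm t]
      nlinarith [sq_nonneg ((X *ᵥ w) t - (X *ᵥ wstar) t)]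
    linarith
  have hmnorm : h wstar ≤ h m := hstarnorm m hmS (fun w' hw' => le_trans hfm (hstarmin w' hw'))
  have hdiff : ∑ i, (w i - wstar i) ^ 2 ≤ 0 := by
    have hid : ∑ i, ((w i + wstar i) / 2) ^ 2 =
        (h w + h wstar) / 2 - (∑ i, (w i - wstar i) ^ 2) / 4 := by
      simp only [hhdef]
      rw [← Finset.sum_add_distrib, Finset.sum_div, Finset.sum_div, ← Finset.sum_sub_distrib]
      apply Finset.sum_congr rfl
      intro i _; ring
    have : h m = (h w + h wstar) / 2 - (∑ i, (w i - wstar i) ^ 2) / 4 := by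
      simp only [hhdef, hmdef] at hid ⊢; exact hid
    rw [this, hnorm_eq] at hmnorm
    linarith
  funext i
  have hzero : ∀ i ∈ Finset.univ, (w i - wstar i) ^ 2 = 0 := by
    rw [← Finset.sum_eq_zero_iff_of_nonneg (fun i _ => sq_nonneg _)]
    exact le_antisymm hdiff (Finset.sum_nonneg fun i _ => sq_nonneg _)
  have := hzero i (Finset.mem_univ i)
  have := sq_eq_zero_iff.mp this
  linarith [this]
end
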